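/- Flattening of QCTL: any QCTL formula Φ is equivalent to a flat formula whose size is linear in |Φ|, i.e. a formula Q.( Φ_0 ∧ ⋀_{i=1..m} AG( κ_i ↔ θ_i ) ) where Q is a sequence of propositional quantifications, Φ_0 is a Boolean combination of basic CTL formulas, and every θ_i is a basic CTL formula. -/

import Mathlib

open Classical

/-- Syntax of QCTL: `φ ::= q | ¬φ | φ∨ψ | EX φ | E φ U ψ | A φ U ψ | ∃p.φ`. -/
inductive QCTL (AP : Type) : Type where
  | atom : AP → QCTL AP
  | qneg : QCTL AP → QCTL AP
  | qor  : QCTL AP → QCTL AP → QCTL AP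
  | qEX  : QCTL AP → QCTL AP
  | qEU  : QCTL AP → QCTL AP → QCTL AP
  | qAU  : QCTL AP → QCTL AP → QCTL AP
  | qexi : AP → QCTL AP → QCTL AP

/-- A Kripke structure over atomic propositions `AP` with (finite) state space `V`:
a serial edge relation and a labelling function. -/
structure Kripke (AP V : Type) where
  E : V → V → Prop
  serial : ∀ v, ∃ w, E v w
  label : V → Set AP

variable {AP V : Type}

/-- `K'` agrees with `K` (same edges) except possibly on the labelling of `p`. -/
def Kripke.AgreeExcept (K K' : Kripke AP V) (p : AP) : Prop :=
  K'.E = K.E ∧ ∀ v q, q ≠ p → (q ∈ K'.label v ↔ q ∈ K.label v)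

/-- Structure semantics of QCTL. -/
def QCTL.sat : QCTL AP → Kripke AP V → V → Prop
  | .atom p, K, x => p ∈ K.label x
  | .qneg φ, K, x => ¬ φ.sat K x
  | .qor φ ψ, K, x => φ.sat K x ∨ ψ.sat K x
  | .qEX φ, K, x => ∃ y, K.E x y ∧ φ.sat K y
  | .qEU φ ψ, K, x => ∃ ρ : ℕ → V, ρ 0 = x ∧ (∀ i, K.E (ρ i) (ρ (i + 1))) ∧
      ∃ i, ψ.sat K (ρ i) ∧ ∀ j < i, φ.sat K (ρ j)
  | .qAU φ ψ, K, x => ∀ ρ : ℕ → V, ρ 0 = x → (∀ i, K.E (ρ i) (ρ (i + 1))) →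
      ∃ i, ψ.sat K (ρ i) ∧ ∀ j < i, φ.sat K (ρ j)
  | .qexi p φ, K, x => ∃ K' : Kripke AP V, K.AgreeExcept K' p ∧ φ.sat K' x

namespace QCTL

def qand (φ ψ : QCTL AP) : QCTL AP := qneg (qor (qneg φ) (qneg ψ))
def qimp (φ ψ : QCTL AP) : QCTL AP := qor (qneg φ) ψ
def qiff (φ ψ : QCTL AP) : QCTL AP := qand (qimp φ ψ) (qimp ψ φ)
def qtop [Inhabited AP] : QCTL AP := qor (atom default) (qneg (atom default))
def qbot [Inhabited AP] : QCTL AP := qneg qtop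
def qAX (φ : QCTL AP) : QCTL AP := qneg (qEX (qneg φ))
def qEF [Inhabited AP] (φ : QCTL AP) : QCTL AP := qEU qtop φ
def qAG [Inhabited AP] (φ : QCTL AP) : QCTL AP := qneg (qEF (qneg φ))
def qall (p : AP) (φ : QCTL AP) : QCTL AP := qneg (qexi p (qneg φ))

/-- All atomic propositions occurring in a formula (free or bound). -/
def atoms : QCTL AP → Set AP
  | atom p => {p}
  | qneg φ => φ.atoms
  | qor φ ψ => φ.atoms ∪ ψ.atoms
  | qEX φ => φ.atoms
  | qEU φ ψ => φ.atoms ∪ ψ.atoms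
  | qAU φ ψ => φ.atoms ∪ ψ.atoms
  | qexi p φ => insert p φ.atoms

/-- Size of a formula. -/
def qsize : QCTL AP → ℕ
  | atom _ => 1
  | qneg φ => φ.qsize + 1
  | qor φ ψ => φ.qsize + ψ.qsize + 1
  | qEX φ => φ.qsize + 1
  | qEU φ ψ => φ.qsize + ψ.qsize + 1
  | qAU φ ψ => φ.qsize + ψ.qsize + 1
  | qexi _ φ => φ.qsize + 1

end QCTL

/-- Equivalence of two QCTL formulas: same truth value at every state of every
(finite) Kripke structure. -/
def QEquiv (φ ψ : QCTL AP) : Prop :=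
  ∀ (V : Type) [Fintype V] (K : Kripke AP V) (x : V), φ.sat K x ↔ ψ.sat K x

/-- `∃p₁.…∃pₙ.φ` for a list of atomic propositions. -/
def exiMany {AP : Type} (l : List AP) (φ : QCTL AP) : QCTL AP := l.foldr QCTL.qexi φ

/-- Conjunction of a list of formulas, with a final base conjunct. -/
def conjList {AP : Type} (l : List (QCTL AP)) (base : QCTL AP) : QCTL AP :=
  l.foldr QCTL.qand base

/-- Disjunction of a list of formulas, with a final base disjunct. -/
def disjList {AP : Type} (l : List (QCTL AP)) (base : QCTL AP) : QCTL AP :=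
  l.foldr QCTL.qor base
/-- Boolean combinations of atomic propositions. -/
inductive BoolAtoms {AP : Type} : QCTL AP → Prop where
  | atom (p : AP) : BoolAtoms (QCTL.atom p)
  | qneg {φ} : BoolAtoms φ → BoolAtoms (QCTL.qneg φ)
  | qor {φ ψ} : BoolAtoms φ → BoolAtoms ψ → BoolAtoms (QCTL.qor φ ψ)

/-- Basic CTL formulas: `EX α`, `E α U β` or `A α U β` with `α`, `β` Boolean
combinations of atomic propositions. -/
inductive BasicCTL {AP : Type} : QCTL AP → Prop where
  | qEX {α} : BoolAtoms α → BasicCTL (QCTL.qEX α)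
  | qEU {α β} : BoolAtoms α → BoolAtoms β → BasicCTL (QCTL.qEU α β)
  | qAU {α β} : BoolAtoms α → BoolAtoms β → BasicCTL (QCTL.qAU α β)

/-- Boolean combinations of basic CTL formulas (and of atomic propositions). -/
inductive BoolCombBasic {AP : Type} : QCTL AP → Prop where
  | basic {φ} : BasicCTL φ → BoolCombBasic φ
  | atom (p : AP) : BoolCombBasic (QCTL.atom p)
  | qneg {φ} : BoolCombBasic φ → BoolCombBasic (QCTL.qneg φ)
  | qor {φ ψ} : BoolCombBasic φ → BoolCombBasic ψ → BoolCombBasic (QCTL.qor φ ψ)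

/-- Quantifier-free QCTL formulas, i.e. CTL formulas. -/
def QCTL.quantFree {AP : Type} : QCTL AP → Prop
  | .atom _ => True
  | .qneg φ => φ.quantFree
  | .qor φ ψ => φ.quantFree ∧ ψ.quantFree
  | .qEX φ => φ.quantFree
  | .qEU φ ψ => φ.quantFree ∧ ψ.quantFree
  | .qAU φ ψ => φ.quantFree ∧ ψ.quantFree
  | .qexi _ _ => False

/-- The body `Φ₀ ∧ ⋀_{i=1..m} AG( κᵢ ↔ θᵢ )` of a flat formula. -/
def flatBody {AP : Type} [Inhabited AP] (m : ℕ) (κ : Fin m → AP)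
    (Φ0 : QCTL AP) (θ : Fin m → QCTL AP) : QCTL AP :=
  conjList
    ((List.finRange m).map fun i => QCTL.qAG (QCTL.qiff (QCTL.atom (κ i)) (θ i)))
    Φ0
/-- A sequence of propositional quantifications applied to a formula
(`true` = existential, `false` = universal). -/
def prefixQ {AP : Type} (Q : List (Bool × AP)) (φ : QCTL AP) : QCTL AP :=
  Q.foldr (fun bp acc => if bp.1 then QCTL.qexi bp.2 acc else QCTL.qall bp.2 acc) φ

/-! ### Auxiliary development for the flattening theorem -/

section FlatAux

open QCTL

variable {AP V : Type}

/-- Reachability in a Kripke structure. -/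
def KReach (K : Kripke AP V) : V → V → Prop := Relation.ReflTransGen K.E

/-- A chosen successor. -/
noncomputable def Kripke.nxt (K : Kripke AP V) (v : V) : V := (K.serial v).choose

lemma Kripke.nxt_edge (K : Kripke AP V) (v : V) : K.E v (K.nxt v) := (K.serial v).choose_spec

/-- The canonical infinite path from a state. -/
noncomputable def Kripke.pathFrom (K : Kripke AP V) (v : V) : ℕ → V
  | 0 => v
  | n+1 => K.nxt (K.pathFrom v n)

@[simp] lemma Kripke.pathFrom_zero (K : Kripke AP V) (v : V) : K.pathFrom v 0 = v := rfl

lemma Kripke.pathFrom_edge (K : Kripke AP V) (v : V) (n : ℕ) :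
    K.E (K.pathFrom v n) (K.pathFrom v (n+1)) := K.nxt_edge _

lemma path_kreach {K : Kripke AP V} {ρ : ℕ → V} (h : ∀ i, K.E (ρ i) (ρ (i+1))) :
    ∀ i, KReach K (ρ 0) (ρ i) := by
  intro i
  induction i with
  | zero => exact Relation.ReflTransGen.refl
  | succ n ih => exact Relation.ReflTransGen.tail ih (h n)

lemma kreach_path {K : Kripke AP V} {x v : V} (h : KReach K x v) :
    ∃ ρ : ℕ → V, ρ 0 = x ∧ (∀ i, K.E (ρ i) (ρ (i+1))) ∧ ∃ n, ρ n = v := by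
  induction h with
  | refl =>
    exact ⟨K.pathFrom x, rfl, fun i => K.pathFrom_edge x i, 0, rfl⟩
  | tail hr he ih =>
    rename_i u w
    obtain ⟨ρ, h0, hedge, n, hn⟩ := ih
    refine ⟨fun i => if i ≤ n then ρ i else K.pathFrom w (i - (n+1)), by simp [h0], ?_, n+1,
      by simp⟩
    intro i
    rcases lt_trichotomy i n with hi | hi | hi
    · simp only [if_pos hi.le, if_pos (Nat.succ_le_of_lt hi)]
      exact hedge i
    · subst hi
      simp only [if_pos le_rfl, if_neg (by omega : ¬ i+1 ≤ i), hn]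
      simpa using he
    · have h1 : ¬ i ≤ n := by omega
      have h2 : ¬ i + 1 ≤ n := by omega
      simp only [if_neg h1, if_neg h2]
      have : i + 1 - (n+1) = (i - (n+1)) + 1 := by omega
      rw [this]
      exact K.pathFrom_edge w _

@[simp] lemma sat_atom {p : AP} {K : Kripke AP V} {x : V} :
    (atom p).sat K x ↔ p ∈ K.label x := Iff.rfl
@[simp] lemma sat_qneg {φ : QCTL AP} {K : Kripke AP V} {x : V} :
    (qneg φ).sat K x ↔ ¬ φ.sat K x := Iff.rfl
@[simp] lemma sat_qor {φ ψ : QCTL AP} {K : Kripke AP V} {x : V} :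
    (qor φ ψ).sat K x ↔ φ.sat K x ∨ ψ.sat K x := Iff.rfl
@[simp] lemma sat_qEX {φ : QCTL AP} {K : Kripke AP V} {x : V} :
    (qEX φ).sat K x ↔ ∃ y, K.E x y ∧ φ.sat K y := Iff.rfl
@[simp] lemma sat_qexi {p : AP} {φ : QCTL AP} {K : Kripke AP V} {x : V} :
    (qexi p φ).sat K x ↔ ∃ K' : Kripke AP V, K.AgreeExcept K' p ∧ φ.sat K' x := Iff.rfl
lemma sat_qEU {φ ψ : QCTL AP} {K : Kripke AP V} {x : V} :
    (qEU φ ψ).sat K x ↔ ∃ ρ : ℕ → V, ρ 0 = x ∧ (∀ i, K.E (ρ i) (ρ (i + 1))) ∧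
      ∃ i, ψ.sat K (ρ i) ∧ ∀ j < i, φ.sat K (ρ j) := Iff.rfl
lemma sat_qAU {φ ψ : QCTL AP} {K : Kripke AP V} {x : V} :
    (qAU φ ψ).sat K x ↔ ∀ ρ : ℕ → V, ρ 0 = x → (∀ i, K.E (ρ i) (ρ (i + 1))) →
      ∃ i, ψ.sat K (ρ i) ∧ ∀ j < i, φ.sat K (ρ j) := Iff.rfl

@[simp] lemma sat_qand {φ ψ : QCTL AP} {K : Kripke AP V} {x : V} :
    (qand φ ψ).sat K x ↔ φ.sat K x ∧ ψ.sat K x := by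
  simp only [qand, sat_qneg, sat_qor]; tauto
@[simp] lemma sat_qimp {φ ψ : QCTL AP} {K : Kripke AP V} {x : V} :
    (qimp φ ψ).sat K x ↔ (φ.sat K x → ψ.sat K x) := by
  simp only [qimp, sat_qneg, sat_qor]; tauto
@[simp] lemma sat_qiff {φ ψ : QCTL AP} {K : Kripke AP V} {x : V} :
    (qiff φ ψ).sat K x ↔ (φ.sat K x ↔ ψ.sat K x) := by
  simp only [qiff, sat_qand, sat_qimp]; tauto
@[simp] lemma sat_qtop [Inhabited AP] {K : Kripke AP V} {x : V} :
    (qtop : QCTL AP).sat K x ↔ True := by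
  simp only [qtop, sat_qneg, sat_qor]; tauto
@[simp] lemma sat_qall {p : AP} {φ : QCTL AP} {K : Kripke AP V} {x : V} :
    (qall p φ).sat K x ↔ ∀ K' : Kripke AP V, K.AgreeExcept K' p → φ.sat K' x := by
  simp only [qall, sat_qneg, sat_qexi, not_exists]
  constructor
  · intro h K' ha
    by_contra hc
    exact h K' ⟨ha, hc⟩
  · intro h K' ⟨ha, hc⟩
    exact hc (h K' ha)

lemma sat_qEF [Inhabited AP] {φ : QCTL AP} {K : Kripke AP V} {x : V} :
    (qEF φ).sat K x ↔ ∃ v, KReach K x v ∧ φ.sat K v := by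
  constructor
  · rintro ⟨ρ, h0, hedge, i, hi, -⟩
    exact ⟨ρ i, h0 ▸ path_kreach hedge i, hi⟩
  · rintro ⟨v, hr, hv⟩
    obtain ⟨ρ, h0, hedge, n, hn⟩ := kreach_path hr
    refine ⟨ρ, h0, hedge, n, ?_, fun j _ => ?_⟩
    · rw [hn]; exact hv
    · simp

lemma sat_qAG [Inhabited AP] {φ : QCTL AP} {K : Kripke AP V} {x : V} :
    (qAG φ).sat K x ↔ ∀ v, KReach K x v → φ.sat K v := by
  simp only [qAG, sat_qneg, sat_qEF]
  push_neg
  simp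

/-- Agreement of two structures outside a set of atoms. -/
def Agrees (S : Set AP) (K K' : Kripke AP V) : Prop :=
  K'.E = K.E ∧ ∀ v q, q ∉ S → (q ∈ K'.label v ↔ q ∈ K.label v)

lemma Agrees.refl (S : Set AP) (K : Kripke AP V) : Agrees S K K := ⟨rfl, by tauto⟩

lemma agreeExcept_refl (K : Kripke AP V) (p : AP) : K.AgreeExcept K p := ⟨rfl, by tauto⟩

lemma Agrees.mono {S T : Set AP} {K K' : Kripke AP V} (h : Agrees S K K') (hst : S ⊆ T) :
    Agrees T K K' := ⟨h.1, fun v q hq => h.2 v q (fun hs => hq (hst hs))⟩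

lemma Agrees.trans {S T : Set AP} {K K' K'' : Kripke AP V}
    (h1 : Agrees S K K') (h2 : Agrees T K' K'') : Agrees (S ∪ T) K K'' :=
  ⟨h2.1.trans h1.1, fun v q hq => by
    have := h1.2 v q (fun h => hq (Or.inl h))
    have := h2.2 v q (fun h => hq (Or.inr h))
    tauto⟩

lemma agreeExcept_agrees {K K' : Kripke AP V} {p : AP} (h : K.AgreeExcept K' p) :
    Agrees {p} K K' := ⟨h.1, fun v q hq => h.2 v q hq⟩

/-- Overriding the labelling of a single atom. -/
def Kripke.override (K : Kripke AP V) (p : AP) (S : Set V) : Kripke AP V :=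
  ⟨K.E, K.serial, fun v => {q | if q = p then v ∈ S else q ∈ K.label v}⟩

@[simp] lemma override_E (K : Kripke AP V) (p : AP) (S : Set V) :
    (K.override p S).E = K.E := rfl

lemma mem_override (K : Kripke AP V) (p : AP) (S : Set V) (v : V) (q : AP) :
    q ∈ (K.override p S).label v ↔ (if q = p then v ∈ S else q ∈ K.label v) := Iff.rfl

lemma agreeExcept_override (K : Kripke AP V) (p : AP) (S : Set V) :
    K.AgreeExcept (K.override p S) p :=
  ⟨rfl, fun v q hq => by simp [mem_override, hq]⟩

/-- Satisfaction only depends on the edge relation and the labelling of the atoms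
occurring in the formula. -/
lemma sat_invar : ∀ (φ : QCTL AP) (K K' : Kripke AP V), K'.E = K.E →
    (∀ v q, q ∈ φ.atoms → (q ∈ K.label v ↔ q ∈ K'.label v)) →
    ∀ x, (φ.sat K x ↔ φ.sat K' x) := by
  intro φ
  induction φ with
  | atom p =>
    intro K K' hE hl x
    exact hl x p rfl
  | qneg φ ih =>
    intro K K' hE hl x
    simp only [sat_qneg]
    exact not_congr (ih K K' hE hl x)
  | qor φ ψ ihφ ihψ =>
    intro K K' hE hl x
    simp only [sat_qor]
    exact or_congr (ihφ K K' hE (fun v q hq => hl v q (Or.inl hq)) x)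
      (ihψ K K' hE (fun v q hq => hl v q (Or.inr hq)) x)
  | qEX φ ih =>
    intro K K' hE hl x
    simp only [sat_qEX, hE]
    exact exists_congr fun y => and_congr_right fun _ => ih K K' hE hl y
  | qEU φ ψ ihφ ihψ =>
    intro K K' hE hl x
    simp only [sat_qEU, hE]
    refine exists_congr fun ρ => and_congr_right fun _ => and_congr_right fun _ =>
      exists_congr fun i => and_congr
        (ihψ K K' hE (fun v q hq => hl v q (Or.inr hq)) _)
        (forall_congr' fun j => forall_congr' fun _ =>
          ihφ K K' hE (fun v q hq => hl v q (Or.inl hq)) _)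
  | qAU φ ψ ihφ ihψ =>
    intro K K' hE hl x
    simp only [sat_qAU, hE]
    refine forall_congr' fun ρ => forall_congr' fun _ => forall_congr' fun _ =>
      exists_congr fun i => and_congr
        (ihψ K K' hE (fun v q hq => hl v q (Or.inr hq)) _)
        (forall_congr' fun j => forall_congr' fun _ =>
          ihφ K K' hE (fun v q hq => hl v q (Or.inl hq)) _)
  | qexi p φ ih =>
    intro K K' hE hl x
    simp only [sat_qexi]
    constructor
    · rintro ⟨K₁, hag, hsat⟩
      refine ⟨K'.override p {v | p ∈ K₁.label v}, agreeExcept_override K' p _, ?_⟩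
      rw [← ih K₁ (K'.override p {v | p ∈ K₁.label v})
        (by rw [override_E, hE, ← hag.1]) ?_ x]
      · exact hsat
      · intro v q hq
        by_cases hqp : q = p
        · subst hqp; simp [mem_override]
        · rw [mem_override, if_neg hqp]
          exact (hag.2 v q hqp).trans (hl v q (by simp [QCTL.atoms, hq]))
    · rintro ⟨K₁, hag, hsat⟩
      refine ⟨K.override p {v | p ∈ K₁.label v}, agreeExcept_override K p _, ?_⟩
      rw [ih (K.override p {v | p ∈ K₁.label v}) K₁
        (by rw [hag.1, hE, override_E]) ?_ x]
      · exact hsat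
      · intro v q hq
        by_cases hqp : q = p
        · subst hqp; simp [mem_override]
        · rw [mem_override, if_neg hqp]
          exact (hl v q (by simp [QCTL.atoms, hq])).trans (hag.2 v q hqp).symm

lemma sat_invar' {φ : QCTL AP} {S : Set AP} {K K' : Kripke AP V}
    (hag : Agrees S K K') (hdisj : ∀ q ∈ φ.atoms, q ∉ S) {x : V} :
    φ.sat K x ↔ φ.sat K' x :=
  sat_invar φ K K' hag.1 (fun v q hq => (hag.2 v q (hdisj q hq)).symm) x


/-! ### Quantifier prefixes -/

/-- Atoms quantified in a prefix. -/
def QAtoms (Q : List (Bool × AP)) : Set AP := {p | ∃ b, (b, p) ∈ Q}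

lemma QAtoms_nil : QAtoms ([] : List (Bool × AP)) = ∅ := by
  ext q; simp [QAtoms]

lemma mem_QAtoms_cons {q p : AP} {b : Bool} {Q : List (Bool × AP)} :
    q ∈ QAtoms ((b, p) :: Q) ↔ q = p ∨ q ∈ QAtoms Q := by
  constructor
  · rintro ⟨b', hb⟩
    rcases List.mem_cons.1 hb with h | h
    · exact Or.inl (congrArg Prod.snd h)
    · exact Or.inr ⟨b', h⟩
  · rintro (rfl | ⟨b', hb⟩)
    · exact ⟨b, List.mem_cons_self⟩
    · exact ⟨b', List.mem_cons_of_mem _ hb⟩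

lemma QAtoms_append {Q₁ Q₂ : List (Bool × AP)} :
    QAtoms (Q₁ ++ Q₂) = QAtoms Q₁ ∪ QAtoms Q₂ := by
  ext q
  simp only [QAtoms, Set.mem_setOf_eq, List.mem_append, Set.mem_union]
  aesop

lemma QAtoms_cons_subset {b : Bool} {p : AP} {Q : List (Bool × AP)} :
    {p} ∪ QAtoms Q ⊆ QAtoms ((b, p) :: Q) := by
  intro q hq
  rw [mem_QAtoms_cons]
  rcases hq with hq | hq
  · exact Or.inl hq
  · exact Or.inr hq

@[simp] lemma prefixQ_nil {φ : QCTL AP} : prefixQ [] φ = φ := rfl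

lemma prefixQ_cons_true {p : AP} {Q : List (Bool × AP)} {φ : QCTL AP} :
    prefixQ ((true, p) :: Q) φ = qexi p (prefixQ Q φ) := rfl

lemma prefixQ_cons_false {p : AP} {Q : List (Bool × AP)} {φ : QCTL AP} :
    prefixQ ((false, p) :: Q) φ = qall p (prefixQ Q φ) := rfl

lemma prefixQ_append {Q₁ Q₂ : List (Bool × AP)} {φ : QCTL AP} :
    prefixQ (Q₁ ++ Q₂) φ = prefixQ Q₁ (prefixQ Q₂ φ) := by
  simp [prefixQ, List.foldr_append]

lemma atoms_qall {p : AP} {φ : QCTL AP} : (qall p φ).atoms = insert p φ.atoms := by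
  simp [qall, QCTL.atoms]

lemma atoms_prefixQ {Q : List (Bool × AP)} {ψ : QCTL AP} :
    (prefixQ Q ψ).atoms ⊆ QAtoms Q ∪ ψ.atoms := by
  induction Q with
  | nil => simp
  | cons bp Q ih =>
    obtain ⟨b, p⟩ := bp
    cases b
    · rw [prefixQ_cons_false, atoms_qall]
      intro q hq
      rcases hq with rfl | hq
      · exact Or.inl (mem_QAtoms_cons.2 (Or.inl rfl))
      · rcases ih hq with h | h
        · exact Or.inl (mem_QAtoms_cons.2 (Or.inr h))
        · exact Or.inr h
    · rw [prefixQ_cons_true]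
      intro q hq
      rcases hq with rfl | hq
      · exact Or.inl (mem_QAtoms_cons.2 (Or.inl rfl))
      · rcases ih hq with h | h
        · exact Or.inl (mem_QAtoms_cons.2 (Or.inr h))
        · exact Or.inr h

lemma prefix_mono : ∀ (Q : List (Bool × AP)) (K : Kripke AP V) (x y : V) (ψ χ : QCTL AP),
    (∀ K' : Kripke AP V, Agrees (QAtoms Q) K K' → ψ.sat K' x → χ.sat K' y) →
    (prefixQ Q ψ).sat K x → (prefixQ Q χ).sat K y := by
  intro Q
  induction Q with
  | nil =>
    intro K x y ψ χ h hs
    exact h K (Agrees.refl _ _) hs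
  | cons bp Q ih =>
    obtain ⟨b, p⟩ := bp
    intro K x y ψ χ h
    cases b
    · rw [prefixQ_cons_false, prefixQ_cons_false, sat_qall, sat_qall]
      intro hs K' hag
      refine ih K' x y ψ χ ?_ (hs K' hag)
      intro K'' hag2 hψ
      exact h K'' (((agreeExcept_agrees hag).trans hag2).mono QAtoms_cons_subset) hψ
    · rw [prefixQ_cons_true, prefixQ_cons_true, sat_qexi, sat_qexi]
      rintro ⟨K', hag, hs⟩
      refine ⟨K', hag, ih K' x y ψ χ ?_ hs⟩
      intro K'' hag2 hψ
      exact h K'' (((agreeExcept_agrees hag).trans hag2).mono QAtoms_cons_subset) hψ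

lemma prefix_congr {Q : List (Bool × AP)} {K : Kripke AP V} {x y : V} {ψ χ : QCTL AP}
    (h : ∀ K' : Kripke AP V, Agrees (QAtoms Q) K K' → (ψ.sat K' x ↔ χ.sat K' y)) :
    (prefixQ Q ψ).sat K x ↔ (prefixQ Q χ).sat K y :=
  ⟨prefix_mono Q K x y ψ χ (fun K' hag => (h K' hag).1),
   prefix_mono Q K y x χ ψ (fun K' hag => (h K' hag).2)⟩

lemma prefix_intro : ∀ (Q : List (Bool × AP)) (K : Kripke AP V) (x : V) (χ : QCTL AP),
    (∀ K' : Kripke AP V, Agrees (QAtoms Q) K K' → χ.sat K' x) →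
    (prefixQ Q χ).sat K x := by
  intro Q
  induction Q with
  | nil =>
    intro K x χ h
    exact h K (Agrees.refl _ _)
  | cons bp Q ih =>
    obtain ⟨b, p⟩ := bp
    intro K x χ h
    cases b
    · rw [prefixQ_cons_false, sat_qall]
      intro K' hag
      refine ih K' x χ ?_
      intro K'' hag2
      exact h K'' (((agreeExcept_agrees hag).trans hag2).mono QAtoms_cons_subset)
    · rw [prefixQ_cons_true, sat_qexi]
      refine ⟨K, agreeExcept_refl K p, ih K x χ ?_⟩
      intro K'' hag2
      exact h K'' (hag2.mono (fun q hq => QAtoms_cons_subset (Or.inr hq)))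

lemma prefix_elim : ∀ (Q : List (Bool × AP)) (K : Kripke AP V) (x : V) (ψ : QCTL AP),
    (prefixQ Q ψ).sat K x →
    ∃ K' : Kripke AP V, Agrees (QAtoms Q) K K' ∧ ψ.sat K' x := by
  intro Q
  induction Q with
  | nil =>
    intro K x ψ h
    exact ⟨K, Agrees.refl _ _, h⟩
  | cons bp Q ih =>
    obtain ⟨b, p⟩ := bp
    intro K x ψ h
    cases b
    · rw [prefixQ_cons_false, sat_qall] at h
      obtain ⟨K', hag, hs⟩ := ih K x ψ (h K (agreeExcept_refl K p))
      exact ⟨K', hag.mono (fun q hq => QAtoms_cons_subset (Or.inr hq)), hs⟩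
    · rw [prefixQ_cons_true, sat_qexi] at h
      obtain ⟨K₁, hag1, hs1⟩ := h
      obtain ⟨K', hag, hs⟩ := ih K₁ x ψ hs1
      exact ⟨K', ((agreeExcept_agrees hag1).trans hag).mono QAtoms_cons_subset, hs⟩

/-- Flip all quantifiers in a prefix. -/
def flipQ (Q : List (Bool × AP)) : List (Bool × AP) := Q.map (fun bp => (!bp.1, bp.2))

lemma QAtoms_flipQ {Q : List (Bool × AP)} : QAtoms (flipQ Q) = QAtoms Q := by
  ext q
  induction Q with
  | nil => simp [flipQ, QAtoms]
  | cons bp Q ih =>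
    obtain ⟨b, p⟩ := bp
    simp only [flipQ, List.map_cons] at *
    rw [mem_QAtoms_cons, mem_QAtoms_cons]
    exact or_congr Iff.rfl ih

lemma prefix_neg : ∀ (Q : List (Bool × AP)) (K : Kripke AP V) (x : V) (ψ : QCTL AP),
    ((prefixQ (flipQ Q) (qneg ψ)).sat K x ↔ ¬ (prefixQ Q ψ).sat K x) := by
  intro Q
  induction Q with
  | nil => intro K x ψ; simp [flipQ]
  | cons bp Q ih =>
    obtain ⟨b, p⟩ := bp
    intro K x ψ
    cases b
    · show ((prefixQ ((true, p) :: flipQ Q) (qneg ψ)).sat K x ↔ _)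
      rw [prefixQ_cons_true, prefixQ_cons_false, sat_qexi, sat_qall]
      constructor
      · rintro ⟨K', hag, hs⟩ hall
        exact (ih K' x ψ).1 hs (hall K' hag)
      · intro h
        by_contra hc
        apply h
        intro K' hag
        by_contra hx
        exact hc ⟨K', hag, (ih K' x ψ).2 hx⟩
    · show ((prefixQ ((false, p) :: flipQ Q) (qneg ψ)).sat K x ↔ _)
      rw [prefixQ_cons_false, prefixQ_cons_true, sat_qall, sat_qexi]
      constructor
      · rintro hall ⟨K', hag, hs⟩
        exact (ih K' x ψ).1 (hall K' hag) hs
      · intro h K' hag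
        rw [ih K' x ψ]
        intro hc
        exact h ⟨K', hag, hc⟩

lemma prefix_clash : ∀ (Q : List (Bool × AP)) (K : Kripke AP V) (x : V) (ψ χ : QCTL AP),
    (prefixQ Q ψ).sat K x → (prefixQ (flipQ Q) χ).sat K x →
    ∃ K' : Kripke AP V, Agrees (QAtoms Q) K K' ∧ ψ.sat K' x ∧ χ.sat K' x := by
  intro Q
  induction Q with
  | nil =>
    intro K x ψ χ h1 h2
    exact ⟨K, Agrees.refl _ _, h1, h2⟩
  | cons bp Q ih =>
    obtain ⟨b, p⟩ := bp
    intro K x ψ χ h1 h2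
    cases b
    · rw [prefixQ_cons_false, sat_qall] at h1
      rw [show flipQ ((false, p) :: Q) = (true, p) :: flipQ Q from rfl,
        prefixQ_cons_true, sat_qexi] at h2
      obtain ⟨K₁, hag1, hs2⟩ := h2
      obtain ⟨K', hag, hψ, hχ⟩ := ih K₁ x ψ χ (h1 K₁ hag1) hs2
      exact ⟨K', ((agreeExcept_agrees hag1).trans hag).mono QAtoms_cons_subset, hψ, hχ⟩
    · rw [prefixQ_cons_true, sat_qexi] at h1
      rw [show flipQ ((true, p) :: Q) = (false, p) :: flipQ Q from rfl,
        prefixQ_cons_false, sat_qall] at h2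
      obtain ⟨K₁, hag1, hs1⟩ := h1
      obtain ⟨K', hag, hψ, hχ⟩ := ih K₁ x ψ χ hs1 (h2 K₁ hag1)
      exact ⟨K', ((agreeExcept_agrees hag1).trans hag).mono QAtoms_cons_subset, hψ, hχ⟩

lemma prefix_vacuous {Q : List (Bool × AP)} {K : Kripke AP V} {x : V} {ψ : QCTL AP}
    (h : ∀ q ∈ ψ.atoms, q ∉ QAtoms Q) :
    (prefixQ Q ψ).sat K x ↔ ψ.sat K x := by
  constructor
  · intro hs
    obtain ⟨K', hag, hs'⟩ := prefix_elim Q K x ψ hs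
    exact (sat_invar' hag h).2 hs'
  · intro hs
    exact prefix_intro Q K x ψ (fun K' hag => (sat_invar' hag h).1 hs)

lemma prefix_and {Q : List (Bool × AP)} {K : Kripke AP V} {x : V} {C D : QCTL AP}
    (h : ∀ q ∈ C.atoms, q ∉ QAtoms Q) :
    (prefixQ Q (qand C D)).sat K x ↔ C.sat K x ∧ (prefixQ Q D).sat K x := by
  constructor
  · intro hs
    constructor
    · obtain ⟨K', hag, hs'⟩ := prefix_elim Q K x _ hs
      exact (sat_invar' hag h).2 (sat_qand.1 hs').1
    · exact prefix_mono Q K x x _ D (fun K' _ hcd => (sat_qand.1 hcd).2) hs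
  · rintro ⟨hC, hD⟩
    refine prefix_mono Q K x x D _ ?_ hD
    intro K' hag hD'
    exact sat_qand.2 ⟨(sat_invar' hag h).1 hC, hD'⟩

/-- Finiteness of the set of atoms. -/
lemma atoms_finite (φ : QCTL AP) : φ.atoms.Finite := by
  induction φ with
  | atom p => exact Set.finite_singleton p
  | qneg φ ih => exact ih
  | qor φ ψ ihφ ihψ => exact ihφ.union ihψ
  | qEX φ ih => exact ih
  | qEU φ ψ ihφ ihψ => exact ihφ.union ihψ
  | qAU φ ψ ihφ ihψ => exact ihφ.union ihψ
  | qexi p φ ih => exact ih.insert p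

lemma QAtoms_finite (Q : List (Bool × AP)) : (QAtoms Q).Finite := by
  induction Q with
  | nil => rw [QAtoms_nil]; exact Set.finite_empty
  | cons bp Q ih =>
    obtain ⟨b, p⟩ := bp
    have : QAtoms ((b, p) :: Q) ⊆ insert p (QAtoms Q) := by
      intro q hq
      rcases mem_QAtoms_cons.1 hq with rfl | hq
      · exact Set.mem_insert _ _
      · exact Set.mem_insert_of_mem _ hq
    exact (ih.insert p).subset this

lemma exists_fresh [Infinite AP] {F : Set AP} (hF : F.Finite) : ∃ p, p ∉ F := by
  have := hF.infinite_compl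
  obtain ⟨p, hp⟩ := this.nonempty
  exact ⟨p, hp⟩


/-! ### Renaming of atoms -/

/-- Map a function over all atoms of a formula. -/
def mapA (f : AP → AP) : QCTL AP → QCTL AP
  | .atom p => .atom (f p)
  | .qneg φ => .qneg (mapA f φ)
  | .qor φ ψ => .qor (mapA f φ) (mapA f ψ)
  | .qEX φ => .qEX (mapA f φ)
  | .qEU φ ψ => .qEU (mapA f φ) (mapA f ψ)
  | .qAU φ ψ => .qAU (mapA f φ) (mapA f ψ)
  | .qexi p φ => .qexi (f p) (mapA f φ)

lemma qsize_mapA (f : AP → AP) (φ : QCTL AP) : (mapA f φ).qsize = φ.qsize := by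
  induction φ <;> simp [mapA, QCTL.qsize, *]

lemma atoms_mapA (f : AP → AP) (φ : QCTL AP) : (mapA f φ).atoms = f '' φ.atoms := by
  induction φ <;>
    simp [mapA, QCTL.atoms, Set.image_union, Set.image_insert_eq, Set.image_singleton, *]

lemma quantFree_mapA (f : AP → AP) (φ : QCTL AP) (h : φ.quantFree) :
    (mapA f φ).quantFree := by
  induction φ <;> simp_all [mapA, QCTL.quantFree]

/-- Pull back a Kripke structure along an atom map. -/
def Kripke.comap (f : AP → AP) (K : Kripke AP V) : Kripke AP V :=
  ⟨K.E, K.serial, fun v => f ⁻¹' K.label v⟩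

@[simp] lemma comap_E (f : AP → AP) (K : Kripke AP V) : (Kripke.comap f K).E = K.E := rfl

@[simp] lemma mem_comap_label (f : AP → AP) (K : Kripke AP V) (v : V) (q : AP) :
    q ∈ (Kripke.comap f K).label v ↔ f q ∈ K.label v := Iff.rfl

lemma comap_comap_invol {σ : AP → AP} (h : Function.Involutive σ) (K : Kripke AP V) :
    Kripke.comap σ (Kripke.comap σ K) = K := by
  obtain ⟨E, ser, lab⟩ := K
  simp only [Kripke.comap, Kripke.mk.injEq]
  refine ⟨trivial, ?_⟩
  funext v
  ext q
  simp [h q]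

lemma mapA_sat (f : AP → AP) : ∀ (φ : QCTL AP), φ.quantFree →
    ∀ (K : Kripke AP V) (x : V), (mapA f φ).sat K x ↔ φ.sat (Kripke.comap f K) x := by
  intro φ
  induction φ with
  | atom p => intro _ K x; simp [mapA]
  | qneg φ ih => intro h K x; simp [mapA, ih h]
  | qor φ ψ ihφ ihψ => intro h K x; simp [mapA, ihφ h.1, ihψ h.2]
  | qEX φ ih =>
    intro h K x
    simp only [mapA, sat_qEX, comap_E]
    exact exists_congr fun y => and_congr_right fun _ => ih h K y
  | qEU φ ψ ihφ ihψ =>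
    intro h K x
    simp only [mapA, sat_qEU, comap_E]
    exact exists_congr fun ρ => and_congr_right fun _ => and_congr_right fun _ =>
      exists_congr fun i => and_congr (ihψ h.2 K _)
        (forall_congr' fun j => forall_congr' fun _ => ihφ h.1 K _)
  | qAU φ ψ ihφ ihψ =>
    intro h K x
    simp only [mapA, sat_qAU, comap_E]
    exact forall_congr' fun ρ => forall_congr' fun _ => forall_congr' fun _ =>
      exists_congr fun i => and_congr (ihψ h.2 K _)
        (forall_congr' fun j => forall_congr' fun _ => ihφ h.1 K _)
  | qexi p φ ih => intro h; exact absurd h (by simp [QCTL.quantFree])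

lemma agree_comap {σ : AP → AP} (hσ : Function.Involutive σ) {p : AP} (hp : σ p = p)
    {K K₁ : Kripke AP V} (h : K.AgreeExcept K₁ p) :
    (Kripke.comap σ K).AgreeExcept (Kripke.comap σ K₁) p := by
  refine ⟨h.1, ?_⟩
  intro v q hq
  simp only [mem_comap_label]
  refine h.2 v (σ q) ?_
  intro hc
  exact hq (by rw [← hσ q, hc, hp])

lemma prefix_comap {σ : AP → AP} (hσ : Function.Involutive σ) :
    ∀ (Q : List (Bool × AP)), (∀ q ∈ QAtoms Q, σ q = q) →
    ∀ (M : QCTL AP), M.quantFree → ∀ (K : Kripke AP V) (x : V),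
    ((prefixQ Q (mapA σ M)).sat K x ↔ (prefixQ Q M).sat (Kripke.comap σ K) x) := by
  intro Q
  induction Q with
  | nil =>
    intro _ M hM K x
    exact mapA_sat σ M hM K x
  | cons bp Q ih =>
    obtain ⟨b, p⟩ := bp
    intro hfix M hM K x
    have hp : σ p = p := hfix p (mem_QAtoms_cons.2 (Or.inl rfl))
    have hfix' : ∀ q ∈ QAtoms Q, σ q = q :=
      fun q hq => hfix q (mem_QAtoms_cons.2 (Or.inr hq))
    cases b
    · rw [prefixQ_cons_false, prefixQ_cons_false, sat_qall, sat_qall]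
      constructor
      · intro h L hag
        have := h (Kripke.comap σ L) (by
          have := agree_comap hσ hp hag
          rwa [comap_comap_invol hσ] at this)
        rw [ih hfix' M hM _ x, comap_comap_invol hσ] at this
        exact this
      · intro h K₁ hag
        rw [ih hfix' M hM K₁ x]
        exact h (Kripke.comap σ K₁) (agree_comap hσ hp hag)
    · rw [prefixQ_cons_true, prefixQ_cons_true, sat_qexi, sat_qexi]
      constructor
      · rintro ⟨K₁, hag, hs⟩
        refine ⟨Kripke.comap σ K₁, agree_comap hσ hp hag, ?_⟩
        rw [← ih hfix' M hM K₁ x]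
        exact hs
      · rintro ⟨L, hag, hs⟩
        refine ⟨Kripke.comap σ L, ?_, ?_⟩
        · have := agree_comap hσ hp hag
          rwa [comap_comap_invol hσ] at this
        · rw [ih hfix' M hM _ x, comap_comap_invol hσ]
          exact hs


/-! ### Marker guard formulas -/

section Markers

set_option linter.unusedSectionVars false

variable [Inhabited AP]

/-- Guard: `m'` marks exactly one reachable state, and that state is marked by `m`. -/
def Gfml (m m' m'' : AP) : QCTL AP :=
  qand (qEF (atom m'))
    (qand (qAG (qimp (atom m') (atom m)))
      (qneg (qand (qEF (qand (atom m') (atom m'')))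
                  (qEF (qand (atom m') (qneg (atom m'')))))))

/-- Guarded block: if the guard holds then `A` holds at the `m'`-marked state. -/
def Gimpl (m m' m'' : AP) (A : QCTL AP) : QCTL AP :=
  qor (qneg (Gfml m m' m'')) (qAG (qimp (atom m') A))

lemma kreach_congr {K K' : Kripke AP V} (h : K'.E = K.E) : KReach K' = KReach K := by
  unfold KReach; rw [h]

lemma sat_Gfml {m m' m'' : AP} {K : Kripke AP V} {x : V} :
    (Gfml m m' m'').sat K x ↔
    ((∃ v, KReach K x v ∧ m' ∈ K.label v) ∧
     (∀ v, KReach K x v → m' ∈ K.label v → m ∈ K.label v) ∧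
     ¬ ((∃ v, KReach K x v ∧ m' ∈ K.label v ∧ m'' ∈ K.label v) ∧
        (∃ v, KReach K x v ∧ m' ∈ K.label v ∧ m'' ∉ K.label v))) := by
  simp only [Gfml, sat_qand, sat_qEF, sat_qAG, sat_qimp, sat_qneg, sat_atom, and_assoc]

lemma atoms_qand {φ ψ : QCTL AP} : (qand φ ψ).atoms = φ.atoms ∪ ψ.atoms := by
  simp [qand, QCTL.atoms]

lemma atoms_qimp {φ ψ : QCTL AP} : (qimp φ ψ).atoms = φ.atoms ∪ ψ.atoms := by
  simp [qimp, QCTL.atoms]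

lemma atoms_qAG {φ : QCTL AP} : (qAG φ).atoms = {default} ∪ φ.atoms := by
  simp [qAG, qEF, qtop, QCTL.atoms]

lemma atoms_qEF {φ : QCTL AP} : (qEF φ).atoms = {default} ∪ φ.atoms := by
  simp [qEF, qtop, QCTL.atoms]

lemma atoms_Gfml {m m' m'' : AP} :
    (Gfml m m' m'' : QCTL AP).atoms ⊆ {default, m, m', m''} := by
  simp only [Gfml, atoms_qand, atoms_qEF, atoms_qAG, atoms_qimp, QCTL.atoms]
  intro q hq
  simp only [Set.mem_union, Set.mem_singleton_iff] at hq
  simp only [Set.mem_insert_iff, Set.mem_singleton_iff]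
  tauto

lemma atoms_Gimpl {m m' m'' : AP} {A : QCTL AP} :
    (Gimpl m m' m'' A).atoms ⊆ {default, m, m', m''} ∪ A.atoms := by
  intro q hq
  simp only [Gimpl, QCTL.atoms, atoms_qAG, atoms_qimp, Set.mem_union,
    Set.mem_singleton_iff] at hq
  simp only [Set.mem_union, Set.mem_insert_iff, Set.mem_singleton_iff]
  rcases hq with hq | hq
  · have := atoms_Gfml hq
    simp only [Set.mem_insert_iff, Set.mem_singleton_iff] at this
    tauto
  · tauto

lemma quantFree_qand {φ ψ : QCTL AP} (h1 : φ.quantFree) (h2 : ψ.quantFree) :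
    (qand φ ψ).quantFree := by
  simp only [qand, QCTL.quantFree]
  exact ⟨h1, h2⟩

lemma quantFree_Gimpl {m m' m'' : AP} {A : QCTL AP} (hA : A.quantFree) :
    (Gimpl m m' m'' A).quantFree := by
  simp [Gimpl, Gfml, qAG, qEF, qtop, qimp, qand, QCTL.quantFree]
  exact hA

/-- The block characterisation lemma. -/
lemma blockChar {Q : List (Bool × AP)} {A ψ : QCTL AP} {m m' m'' : AP}
    (hmm' : m ≠ m') (hmm'' : m ≠ m'') (hm'm'' : m' ≠ m'')
    (hmQ : m ∉ QAtoms Q) (hm'Q : m' ∉ QAtoms Q) (hm''Q : m'' ∉ QAtoms Q)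
    (hm'A : m' ∉ A.atoms) (hm''A : m'' ∉ A.atoms)
    (HQ : ∀ (K : Kripke AP V) (y : V), ψ.sat K y ↔ (prefixQ Q A).sat K y)
    (K₀ : Kripke AP V) (x : V) :
    ((prefixQ ((false, m') :: (true, m'') :: Q) (Gimpl m m' m'' A)).sat K₀ x ↔
    (∀ v, KReach K₀ x v → m ∈ K₀.label v → ψ.sat K₀ v)) := by
  rw [prefixQ_cons_false, sat_qall]
  constructor
  · -- from the block to the per-state property
    intro h v hv hm
    have h1 := h (K₀.override m' {v}) (agreeExcept_override K₀ m' _)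
    rw [prefixQ_cons_true, sat_qexi] at h1
    obtain ⟨K₂, hag2, hs⟩ := h1
    have hE2 : K₂.E = K₀.E := by rw [hag2.1]; rfl
    have hm'K₂ : ∀ u, m' ∈ K₂.label u ↔ u = v := by
      intro u
      rw [hag2.2 u m' hm'm'']
      simp [mem_override]
    have hmK₂ : ∀ u, m ∈ K₂.label u ↔ m ∈ K₀.label u := by
      intro u
      rw [hag2.2 u m hmm'']
      simp [mem_override, hmm']
    have hmono : (prefixQ Q A).sat K₂ v := by
      refine prefix_mono Q K₂ x v _ A ?_ hs
      intro K' hag hGimpl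
      have hE' : K'.E = K₀.E := by rw [hag.1, hE2]
      have hm'K' : ∀ u, m' ∈ K'.label u ↔ u = v :=
        fun u => (hag.2 u m' hm'Q).trans (hm'K₂ u)
      have hmK' : ∀ u, m ∈ K'.label u ↔ m ∈ K₀.label u :=
        fun u => (hag.2 u m hmQ).trans (hmK₂ u)
      rw [Gimpl, sat_qor] at hGimpl
      rcases hGimpl with hG | hG
      · exfalso
        rw [sat_qneg, sat_Gfml] at hG
        apply hG
        refine ⟨⟨v, by rw [kreach_congr hE']; exact hv, (hm'K' v).2 rfl⟩, ?_, ?_⟩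
        · intro u _ hum'
          have hu : u = v := (hm'K' u).1 hum'
          subst hu
          exact (hmK' u).2 hm
        · rintro ⟨⟨u₁, _, hu₁, hu₁''⟩, ⟨u₂, _, hu₂, hu₂''⟩⟩
          have e1 : u₁ = v := (hm'K' u₁).1 hu₁
          have e2 : u₂ = v := (hm'K' u₂).1 hu₂
          subst e1; subst e2
          exact hu₂'' hu₁''
      · rw [sat_qAG] at hG
        have := hG v (by rw [kreach_congr hE']; exact hv)
        rw [sat_qimp] at this
        exact this ((hm'K' v).2 rfl)
    -- transfer back to K₀
    have hagfull : Agrees ({m'} ∪ {m''}) K₀ K₂ :=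
      (agreeExcept_agrees (agreeExcept_override K₀ m' {v})).trans (agreeExcept_agrees hag2)
    have : (prefixQ Q A).sat K₀ v := by
      refine (sat_invar' hagfull ?_).2 hmono
      intro q hq hq'
      rcases atoms_prefixQ hq with h' | h'
      · rcases hq' with rfl | rfl
        · exact hm'Q h'
        · exact hm''Q h'
      · rcases hq' with rfl | rfl
        · exact hm'A h'
        · exact hm''A h'
    exact (HQ K₀ v).2 this
  · -- from the per-state property to the block
    intro h K₁ hag1
    have hE1 : K₁.E = K₀.E := hag1.1
    rw [prefixQ_cons_true, sat_qexi]
    set S : Set V := {u | KReach K₀ x u ∧ m' ∈ K₁.label u} with hS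
    by_cases hne : ∃ u, u ∈ S
    · obtain ⟨u, hu⟩ := hne
      by_cases huniq : ∀ w ∈ S, w = u
      · by_cases hmu : m ∈ K₀.label u
        · -- good case
          refine ⟨K₁, agreeExcept_refl K₁ m'', ?_⟩
          have hψ : ψ.sat K₀ u := h u hu.1 (by exact hmu)
          have hA0 : (prefixQ Q A).sat K₀ u := (HQ K₀ u).1 hψ
          have hA1 : (prefixQ Q A).sat K₁ u := by
            refine (sat_invar' (agreeExcept_agrees hag1) ?_).1 hA0
            intro q hq hq'
            rcases atoms_prefixQ hq with h' | h'
            · exact hm'Q (hq' ▸ h')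
            · exact hm'A (hq' ▸ h')
          refine prefix_mono Q K₁ u x A _ ?_ hA1
          intro K' hag hAv
          have hE' : K'.E = K₀.E := by rw [hag.1, hE1]
          rw [Gimpl, sat_qor]
          right
          rw [sat_qAG]
          intro w hw
          rw [sat_qimp]
          intro hwm'
          have hw0 : KReach K₀ x w := by rw [kreach_congr hE'] at hw; exact hw
          have hwS : w ∈ S := ⟨hw0, by rw [← (hag.2 w m' hm'Q)]; exact hwm'⟩
          rw [huniq w hwS]
          exact hAv
        · -- bad: unique reachable m'-state not marked by m
          refine ⟨K₁, agreeExcept_refl K₁ m'', ?_⟩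
          refine prefix_intro Q K₁ x _ ?_
          intro K' hag
          have hE' : K'.E = K₀.E := by rw [hag.1, hE1]
          rw [Gimpl, sat_qor]
          left
          rw [sat_qneg, sat_Gfml]
          push_neg
          intro _ h2
          exfalso
          have := h2 u (by rw [kreach_congr hE']; exact hu.1)
            (by rw [(hag.2 u m' hm'Q)]; exact hu.2)
          rw [(hag.2 u m hmQ), hag1.2 u m hmm'] at this
          exact hmu this
      · -- bad: two distinct reachable m'-states
        push_neg at huniq
        obtain ⟨w, hw, hwu⟩ := huniq
        refine ⟨K₁.override m'' {u}, agreeExcept_override K₁ m'' _, ?_⟩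
        refine prefix_intro Q (K₁.override m'' {u}) x _ ?_
        intro K' hag
        have hE' : K'.E = K₀.E := by rw [hag.1]; exact hE1
        have hm'K' : ∀ t, m' ∈ K'.label t ↔ m' ∈ K₁.label t := by
          intro t
          rw [hag.2 t m' hm'Q, mem_override, if_neg hm'm'']
        have hm''K' : ∀ t, m'' ∈ K'.label t ↔ t = u := by
          intro t
          rw [hag.2 t m'' hm''Q, mem_override, if_pos rfl]
          simp
        rw [Gimpl, sat_qor]
        left
        rw [sat_qneg, sat_Gfml]
        push_neg
        intro _ _
        constructor
        · exact ⟨u, by rw [kreach_congr hE']; exact hu.1,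
            (hm'K' u).2 hu.2, (hm''K' u).2 rfl⟩
        · refine ⟨w, by rw [kreach_congr hE']; exact hw.1, (hm'K' w).2 hw.2, ?_⟩
          rw [hm''K' w]
          exact hwu
    · -- bad: no reachable m'-state
      refine ⟨K₁, agreeExcept_refl K₁ m'', ?_⟩
      refine prefix_intro Q K₁ x _ ?_
      intro K' hag
      have hE' : K'.E = K₀.E := by rw [hag.1, hE1]
      rw [Gimpl, sat_qor]
      left
      rw [sat_qneg, sat_Gfml]
      push_neg
      intro h1
      exfalso
      obtain ⟨t, ht1, ht2⟩ := h1
      refine hne ⟨t, ?_, ?_⟩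
      · rw [kreach_congr hE'] at ht1; exact ht1
      · rw [← (hag.2 t m' hm'Q)]; exact ht2

end Markers


/-! ### Semantic marker lemmas for temporal operators -/

section SemMarkers

set_option linter.unusedSectionVars false

variable [Inhabited AP]

lemma kreach_override {K : Kripke AP V} {p : AP} {S : Set V} {x v : V} :
    KReach (K.override p S) x v ↔ KReach K x v := by
  rw [kreach_congr (override_E K p S)]

lemma agrees_pair {K K₁ K₂ : Kripke AP V} {z w : AP}
    (h1 : K.AgreeExcept K₁ z) (h2 : K₁.AgreeExcept K₂ w) :
    Agrees {z, w} K K₂ := by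
  have := (agreeExcept_agrees h1).trans (agreeExcept_agrees h2)
  refine this.mono ?_
  intro q hq
  rcases hq with hq | hq
  · exact Set.mem_insert_iff.2 (Or.inl (Set.mem_singleton_iff.1 hq))
  · exact Set.mem_insert_iff.2 (Or.inr hq)

lemma semEX {φ : QCTL AP} {m : AP} (hm : m ∉ φ.atoms) (K : Kripke AP V) (x : V) :
    ((qEX φ).sat K x ↔ ∃ K₁ : Kripke AP V, K.AgreeExcept K₁ m ∧
      ((qEX (QCTL.atom m)).sat K₁ x ∧
        ∀ v, KReach K₁ x v → m ∈ K₁.label v → φ.sat K₁ v)) := by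
  constructor
  · rintro ⟨y, hxy, hy⟩
    refine ⟨K.override m {y}, agreeExcept_override K m _, ⟨y, hxy, by simp [mem_override]⟩, ?_⟩
    intro v _ hv
    have : v = y := by simpa [mem_override] using hv
    subst this
    refine (sat_invar' (agreeExcept_agrees (agreeExcept_override K m _)) ?_).1 hy
    intro q hq hq'
    rw [Set.mem_singleton_iff] at hq'
    exact hm (hq' ▸ hq)
  · rintro ⟨K₁, hag, ⟨y, hxy, hy⟩, hall⟩
    have hE : K₁.E = K.E := hag.1
    rw [hE] at hxy
    refine ⟨y, hxy, ?_⟩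
    have : KReach K₁ x y := by
      rw [kreach_congr hE]
      exact Relation.ReflTransGen.single hxy
    have := hall y this hy
    refine (sat_invar' (agreeExcept_agrees hag) ?_).2 this
    intro q hq hq'
    rw [Set.mem_singleton_iff] at hq'
    exact hm (hq' ▸ hq)

lemma semEU {φ χ : QCTL AP} {z w : AP} (hzφ : z ∉ φ.atoms) (hzχ : z ∉ χ.atoms)
    (hwφ : w ∉ φ.atoms) (hwχ : w ∉ χ.atoms) (hzw : z ≠ w) (K : Kripke AP V) (x : V) :
    ((qEU φ χ).sat K x ↔ ∃ K₁ : Kripke AP V, K.AgreeExcept K₁ z ∧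
      ∃ K₂ : Kripke AP V, K₁.AgreeExcept K₂ w ∧
      ((qEU (QCTL.atom z) (QCTL.atom w)).sat K₂ x ∧
       (∀ v, KReach K₂ x v → z ∈ K₂.label v → φ.sat K₂ v) ∧
       (∀ v, KReach K₂ x v → w ∈ K₂.label v → χ.sat K₂ v))) := by
  constructor
  · rintro ⟨ρ, h0, hedge, i, hi, hj⟩
    set K₁ := K.override z {v | ∃ j < i, ρ j = v} with hK₁
    set K₂ := K₁.override w {ρ i} with hK₂
    have hagKK₂ : Agrees {z, w} K K₂ :=
      agrees_pair (agreeExcept_override K z _) (agreeExcept_override K₁ w _)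
    have hinv : ∀ (ξ : QCTL AP), z ∉ ξ.atoms → w ∉ ξ.atoms →
        ∀ v, (ξ.sat K v ↔ ξ.sat K₂ v) := by
      intro ξ h1 h2 v
      refine sat_invar' hagKK₂ ?_
      intro q hq hq'
      rcases hq' with rfl | hq'
      · exact h1 hq
      · rw [Set.mem_singleton_iff] at hq'
        exact h2 (hq' ▸ hq)
    have hzK₂ : ∀ v, z ∈ K₂.label v ↔ ∃ j < i, ρ j = v := by
      intro v
      simp [hK₂, hK₁, mem_override, hzw]
    have hwK₂ : ∀ v, w ∈ K₂.label v ↔ v = ρ i := by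
      intro v
      simp [hK₂, mem_override]
    refine ⟨K₁, agreeExcept_override K z _, K₂, agreeExcept_override K₁ w _, ?_, ?_, ?_⟩
    · refine ⟨ρ, h0, ?_, i, ?_, ?_⟩
      · intro k; exact hedge k
      · exact (hwK₂ (ρ i)).2 rfl
      · intro j hji
        exact (hzK₂ (ρ j)).2 ⟨j, hji, rfl⟩
    · intro v _ hv
      obtain ⟨j, hji, rfl⟩ := (hzK₂ v).1 hv
      exact (hinv φ hzφ hwφ _).1 (hj j hji)
    · intro v _ hv
      have := (hwK₂ v).1 hv
      subst this
      exact (hinv χ hzχ hwχ _).1 hi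
  · rintro ⟨K₁, hag1, K₂, hag2, ⟨ρ, h0, hedge, i, hi, hj⟩, hz, hw⟩
    have hE : K₂.E = K.E := by rw [hag2.1, hag1.1]
    have hagKK₂ : Agrees {z, w} K K₂ := agrees_pair hag1 hag2
    have hinv : ∀ (ξ : QCTL AP), z ∉ ξ.atoms → w ∉ ξ.atoms →
        ∀ v, (ξ.sat K₂ v ↔ ξ.sat K v) := by
      intro ξ h1 h2 v
      refine (sat_invar' hagKK₂ ?_).symm
      intro q hq hq'
      rcases hq' with rfl | hq'
      · exact h1 hq
      · rw [Set.mem_singleton_iff] at hq'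
        exact h2 (hq' ▸ hq)
    refine ⟨ρ, h0, by rw [← hE]; exact hedge, i, ?_, ?_⟩
    · have hreach : KReach K₂ x (ρ i) := by
        rw [← h0]
        exact path_kreach hedge i
      exact (hinv χ hzχ hwχ _).1 (hw (ρ i) hreach hi)
    · intro j hji
      have hreach : KReach K₂ x (ρ j) := by
        rw [← h0]
        exact path_kreach hedge j
      exact (hinv φ hzφ hwφ _).1 (hz (ρ j) hreach (hj j hji))

lemma semAU {φ χ : QCTL AP} {z w : AP} (hzφ : z ∉ φ.atoms) (hzχ : z ∉ χ.atoms)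
    (hwφ : w ∉ φ.atoms) (hwχ : w ∉ χ.atoms) (hzw : z ≠ w) (K : Kripke AP V) (x : V) :
    ((qAU φ χ).sat K x ↔ ∃ K₁ : Kripke AP V, K.AgreeExcept K₁ z ∧
      ∃ K₂ : Kripke AP V, K₁.AgreeExcept K₂ w ∧
      ((qAU (QCTL.atom z) (QCTL.atom w)).sat K₂ x ∧
       (∀ v, KReach K₂ x v → z ∈ K₂.label v → φ.sat K₂ v) ∧
       (∀ v, KReach K₂ x v → w ∈ K₂.label v → χ.sat K₂ v))) := by
  constructor
  · intro hAU
    set K₁ := K.override z {v | KReach K x v ∧ φ.sat K v} with hK₁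
    set K₂ := K₁.override w {v | KReach K x v ∧ χ.sat K v} with hK₂
    have hagKK₂ : Agrees {z, w} K K₂ :=
      agrees_pair (agreeExcept_override K z _) (agreeExcept_override K₁ w _)
    have hinv : ∀ (ξ : QCTL AP), z ∉ ξ.atoms → w ∉ ξ.atoms →
        ∀ v, (ξ.sat K v ↔ ξ.sat K₂ v) := by
      intro ξ h1 h2 v
      refine sat_invar' hagKK₂ ?_
      intro q hq hq'
      rcases hq' with rfl | hq'
      · exact h1 hq
      · rw [Set.mem_singleton_iff] at hq'
        exact h2 (hq' ▸ hq)
    have hE2 : K₂.E = K.E := rfl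
    have hzK₂ : ∀ v, z ∈ K₂.label v ↔ (KReach K x v ∧ φ.sat K v) := by
      intro v
      simp [hK₂, hK₁, mem_override, hzw]
    have hwK₂ : ∀ v, w ∈ K₂.label v ↔ (KReach K x v ∧ χ.sat K v) := by
      intro v
      simp [hK₂, mem_override]
    refine ⟨K₁, agreeExcept_override K z _, K₂, agreeExcept_override K₁ w _, ?_, ?_, ?_⟩
    · intro ρ h0 hedge
      obtain ⟨i, hi, hj⟩ := hAU ρ h0 hedge
      have hre : ∀ k, KReach K x (ρ k) := by
        intro k
        rw [← h0]
        exact path_kreach hedge k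
      refine ⟨i, (hwK₂ (ρ i)).2 ⟨hre i, hi⟩, fun j hji => (hzK₂ (ρ j)).2 ⟨hre j, hj j hji⟩⟩
    · intro v _ hv
      exact (hinv φ hzφ hwφ v).1 ((hzK₂ v).1 hv).2
    · intro v _ hv
      exact (hinv χ hzχ hwχ v).1 ((hwK₂ v).1 hv).2
  · rintro ⟨K₁, hag1, K₂, hag2, hop, hz, hw⟩
    have hE : K₂.E = K.E := by rw [hag2.1, hag1.1]
    have hagKK₂ : Agrees {z, w} K K₂ := agrees_pair hag1 hag2
    have hinv : ∀ (ξ : QCTL AP), z ∉ ξ.atoms → w ∉ ξ.atoms →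
        ∀ v, (ξ.sat K₂ v ↔ ξ.sat K v) := by
      intro ξ h1 h2 v
      refine (sat_invar' hagKK₂ ?_).symm
      intro q hq hq'
      rcases hq' with rfl | hq'
      · exact h1 hq
      · rw [Set.mem_singleton_iff] at hq'
        exact h2 (hq' ▸ hq)
    intro ρ h0 hedge
    obtain ⟨i, hi, hj⟩ := hop ρ h0 (by rw [hE]; exact hedge)
    have hre : ∀ k, KReach K₂ x (ρ k) := by
      intro k
      rw [← h0]
      refine path_kreach ?_ k
      rw [hE]
      exact hedge
    refine ⟨i, (hinv χ hzχ hwχ _).1 (hw (ρ i) (hre i) hi),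
      fun j hji => (hinv φ hzφ hwφ _).1 (hz (ρ j) (hre j) (hj j hji))⟩

end SemMarkers

/-! ### Size lemmas -/

lemma qsize_qall {p : AP} {φ : QCTL AP} : (qall p φ).qsize = φ.qsize + 3 := by
  simp [qall, QCTL.qsize]

lemma qsize_prefixQ {Q : List (Bool × AP)} {ψ : QCTL AP} :
    (prefixQ Q ψ).qsize ≤ 3 * Q.length + ψ.qsize := by
  induction Q with
  | nil => simp
  | cons bp Q ih =>
    obtain ⟨b, p⟩ := bp
    cases b
    · rw [prefixQ_cons_false, qsize_qall]
      simp only [List.length_cons]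
      omega
    · rw [prefixQ_cons_true]
      show (prefixQ Q ψ).qsize + 1 ≤ _
      simp only [List.length_cons]
      omega

lemma qsize_qand {φ ψ : QCTL AP} : (qand φ ψ).qsize = φ.qsize + ψ.qsize + 4 := by
  simp [qand, QCTL.qsize]; omega

lemma qsize_qimp {φ ψ : QCTL AP} : (qimp φ ψ).qsize = φ.qsize + ψ.qsize + 2 := by
  simp [qimp, QCTL.qsize]; omega

lemma qsize_qtop [Inhabited AP] : (qtop : QCTL AP).qsize = 4 := by
  simp [qtop, QCTL.qsize]

lemma qsize_qAG [Inhabited AP] {φ : QCTL AP} : (qAG φ).qsize = φ.qsize + 7 := by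
  simp [qAG, qEF, qtop, QCTL.qsize]; omega

lemma qsize_qEF [Inhabited AP] {φ : QCTL AP} : (qEF φ).qsize = φ.qsize + 5 := by
  simp [qEF, qtop, QCTL.qsize]; omega

lemma qsize_Gfml [Inhabited AP] {m m' m'' : AP} :
    (Gfml m m' m'' : QCTL AP).qsize ≤ 60 := by
  simp [Gfml, qsize_qand, qsize_qEF, qsize_qAG, qsize_qimp, QCTL.qsize]

lemma qsize_Gimpl [Inhabited AP] {m m' m'' : AP} {A : QCTL AP} :
    (Gimpl m m' m'' A).qsize ≤ A.qsize + 75 := by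
  have h1 := qsize_Gfml (AP := AP) (m := m) (m' := m') (m'' := m'')
  simp only [Gimpl, QCTL.qsize, qsize_qAG, qsize_qimp]
  omega


/-! ### Stage 1: prenex normal form -/

lemma exists_fresh1 [Infinite AP] {F : Set AP} (hF : F.Finite) :
    ∃ p, p ∉ F := exists_fresh hF

section Stage1

set_option linter.unusedSectionVars false
set_option maxHeartbeats 1000000

variable [Inhabited AP] [Infinite AP]

lemma stage1 (φ : QCTL AP) :
    ∀ (F : Set AP), F.Finite →
    ∃ (Q : List (Bool × AP)) (M : QCTL AP),
      M.quantFree ∧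
      (∀ q ∈ QAtoms Q, q ∉ insert default (F ∪ φ.atoms)) ∧
      (∀ q ∈ M.atoms, q ∈ insert default (φ.atoms ∪ QAtoms Q)) ∧
      3 * Q.length + M.qsize ≤ 200 * φ.qsize ∧
      (∀ (W : Type) (K : Kripke AP W) (x : W), φ.sat K x ↔ (prefixQ Q M).sat K x) := by
  induction φ with
  | atom p =>
    intro F hF
    refine ⟨[], QCTL.atom p, trivial, ?_, ?_, ?_, ?_⟩
    · intro q hq; rw [QAtoms_nil] at hq; exact absurd hq (Set.notMem_empty q)
    · intro q hq; exact Set.mem_insert_of_mem _ (Or.inl hq)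
    · simp [QCTL.qsize]
    · intro W K x; simp
  | qneg φ ih =>
    intro F hF
    obtain ⟨Q, M, hqf, hQ, hM, hsize, HQ⟩ := ih F hF
    refine ⟨flipQ Q, QCTL.qneg M, hqf, ?_, ?_, ?_, ?_⟩
    · intro q hq
      rw [QAtoms_flipQ] at hq
      exact hQ q hq
    · intro q hq
      rw [show (QCTL.qneg φ).atoms = φ.atoms from rfl, QAtoms_flipQ]
      exact hM q hq
    · have : (flipQ Q).length = Q.length := List.length_map _
      simp only [this, QCTL.qsize]
      omega
    · intro W K x
      rw [show (QCTL.qneg φ).sat K x ↔ ¬ φ.sat K x from Iff.rfl]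
      rw [HQ W K x]
      exact (prefix_neg Q K x M).symm
  | qor φ ψ ihφ ihψ =>
    intro F hF
    obtain ⟨Q₁, M₁, hqf1, hQ1, hM1, hsize1, HQ1⟩ := ihφ (F ∪ ψ.atoms) (hF.union (atoms_finite ψ))
    obtain ⟨Q₂, M₂, hqf2, hQ2, hM2, hsize2, HQ2⟩ :=
      ihψ (F ∪ φ.atoms ∪ QAtoms Q₁) ((hF.union (atoms_finite φ)).union (QAtoms_finite Q₁))
    have hQ1' : ∀ q ∈ QAtoms Q₁, q ≠ default ∧ q ∉ F ∧ q ∉ φ.atoms ∧ q ∉ ψ.atoms := by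
      intro q hq
      have := hQ1 q hq
      simp only [Set.mem_insert_iff, Set.mem_union, not_or] at this
      tauto
    have hQ2' : ∀ q ∈ QAtoms Q₂,
        q ≠ default ∧ q ∉ F ∧ q ∉ φ.atoms ∧ q ∉ ψ.atoms ∧ q ∉ QAtoms Q₁ := by
      intro q hq
      have := hQ2 q hq
      simp only [Set.mem_insert_iff, Set.mem_union, not_or] at this
      tauto
    have hM1' : ∀ q ∈ M₁.atoms, q ∉ QAtoms Q₂ := by
      intro q hq hq2
      have h2 := hQ2' q hq2
      rcases hM1 q hq with rfl | (h | h)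
      · exact h2.1 rfl
      · exact h2.2.2.1 h
      · exact h2.2.2.2.2 h
    have hM2' : ∀ q ∈ M₂.atoms, q ∉ QAtoms Q₁ := by
      intro q hq hq1
      have h1 := hQ1' q hq1
      rcases hM2 q hq with rfl | (h | h)
      · exact h1.1 rfl
      · exact h1.2.2.2 h
      · exact (hQ2' q h).2.2.2.2 hq1
    have hpm2 : ∀ q ∈ (prefixQ Q₂ M₂).atoms, q ∉ QAtoms Q₁ := by
      intro q hq
      rcases atoms_prefixQ hq with h | h
      · exact fun hq1 => (hQ2' q h).2.2.2.2 hq1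
      · exact hM2' q h
    refine ⟨Q₁ ++ Q₂, QCTL.qor M₁ M₂, ⟨hqf1, hqf2⟩, ?_, ?_, ?_, ?_⟩
    · intro q hq
      rw [QAtoms_append] at hq
      simp only [Set.mem_insert_iff, Set.mem_union, not_or, QCTL.atoms]
      rcases hq with hq | hq
      · have := hQ1' q hq; tauto
      · have := hQ2' q hq; tauto
    · intro q hq
      simp only [QCTL.atoms, Set.mem_union] at hq
      simp only [Set.mem_insert_iff, Set.mem_union, QAtoms_append, QCTL.atoms]
      rcases hq with hq | hq
      · rcases hM1 q hq with h | (h | h) <;> tauto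
      · rcases hM2 q hq with h | (h | h) <;> tauto
    · rw [List.length_append]
      simp only [QCTL.qsize]
      omega
    · intro W K x
      constructor
      · intro hor
        rw [prefixQ_append]
        rcases hor with hφ | hψ'
        · rw [HQ1 W K x] at hφ
          refine prefix_mono Q₁ K x x M₁ _ ?_ hφ
          intro K' hag h1
          refine prefix_intro Q₂ K' x _ ?_
          intro K'' hag2
          rw [sat_qor]
          left
          exact (sat_invar' hag2 hM1').1 h1
        · rw [HQ2 W K x] at hψ'
          refine prefix_intro Q₁ K x _ ?_
          intro K' hag
          have h2 : (prefixQ Q₂ M₂).sat K' x := (sat_invar' hag hpm2).1 hψ'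
          refine prefix_mono Q₂ K' x x M₂ _ ?_ h2
          intro K'' hag2 h2'
          rw [sat_qor]
          right
          exact h2'
      · intro hpre
        by_contra hor
        rw [sat_qor] at hor
        push_neg at hor
        have hn1 : (prefixQ (flipQ Q₁) (QCTL.qneg M₁)).sat K x :=
          (prefix_neg Q₁ K x M₁).2 (fun hc => hor.1 ((HQ1 W K x).2 hc))
        have hn2 : (prefixQ (flipQ Q₂) (QCTL.qneg M₂)).sat K x :=
          (prefix_neg Q₂ K x M₂).2 (fun hc => hor.2 ((HQ2 W K x).2 hc))
        rw [prefixQ_append] at hpre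
        obtain ⟨K', hag', h1, h2⟩ := prefix_clash Q₁ K x _ _ hpre hn1
        have hn2' : (prefixQ (flipQ Q₂) (QCTL.qneg M₂)).sat K' x := by
          refine (sat_invar' hag' ?_).1 hn2
          intro q hq
          rcases atoms_prefixQ hq with h | h
          · rw [QAtoms_flipQ] at h
            exact fun hq1 => (hQ2' q h).2.2.2.2 hq1
          · exact hM2' q h
        obtain ⟨K'', hag'', h3, h4⟩ := prefix_clash Q₂ K' x _ _ h1 hn2'
        rw [sat_qor] at h3
        rw [sat_qneg] at h2 h4
        rcases h3 with h3 | h3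
        · exact absurd h3 (fun hc => h2 ((sat_invar' hag'' hM1').2 hc)) -- M₁ at K'' vs qneg M₁ at K'
        · exact h4 h3
  | qexi p φ ih =>
    intro F hF
    obtain ⟨Q, M, hqf, hQ, hM, hsize, HQ⟩ := ih (F ∪ {p}) (hF.union (Set.finite_singleton p))
    have hQ' : ∀ q ∈ QAtoms Q, q ≠ default ∧ q ∉ F ∧ q ≠ p ∧ q ∉ φ.atoms := by
      intro q hq
      have := hQ q hq
      simp only [Set.mem_insert_iff, Set.mem_union, Set.mem_singleton_iff, not_or] at this
      tauto
    obtain ⟨p', hp'⟩ := exists_fresh1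
      (((((hF.union (atoms_finite φ)).union (QAtoms_finite Q)).insert p).insert default))
    have hp'' : p' ≠ default ∧ p' ≠ p ∧ p' ∉ F ∧ p' ∉ φ.atoms ∧ p' ∉ QAtoms Q := by
      simp only [Set.mem_insert_iff, Set.mem_union, not_or] at hp'
      tauto
    set σ : AP → AP := ⇑(Equiv.swap p p') with hσdef
    have hσ : Function.Involutive σ := fun q => Equiv.swap_apply_self p p' q
    have hfix : ∀ q ∈ QAtoms Q, σ q = q := by
      intro q hq
      exact Equiv.swap_apply_of_ne_of_ne (hQ' q hq).2.2.1 (fun h => hp''.2.2.2.2 (h ▸ hq))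
    have hMp' : p' ∉ M.atoms := by
      intro hc
      rcases hM p' hc with h | (h | h)
      · exact hp''.1 h
      · exact hp''.2.2.2.1 h
      · exact hp''.2.2.2.2 h
    refine ⟨(true, p') :: Q, mapA σ M, quantFree_mapA σ M hqf, ?_, ?_, ?_, ?_⟩
    · intro q hq
      simp only [Set.mem_insert_iff, Set.mem_union, QCTL.atoms, not_or]
      rcases mem_QAtoms_cons.1 hq with rfl | hq
      · exact ⟨hp''.1, hp''.2.2.1, hp''.2.1, hp''.2.2.2.1⟩
      · have := hQ' q hq
        exact ⟨this.1, this.2.1, this.2.2.1, this.2.2.2⟩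
    · intro q hq
      rw [atoms_mapA] at hq
      obtain ⟨r, hr, rfl⟩ := hq
      by_cases hrp : r = p
      · rw [hrp, hσdef, Equiv.swap_apply_left]
        exact Set.mem_insert_of_mem _ (Or.inr (mem_QAtoms_cons.2 (Or.inl rfl)))
      · by_cases hrp' : r = p'
        · exact absurd (hrp' ▸ hr) hMp'
        · rw [hσdef, Equiv.swap_apply_of_ne_of_ne hrp hrp']
          rcases hM r hr with h | (h | h)
          · exact Set.mem_insert_iff.2 (Or.inl h)
          · exact Set.mem_insert_of_mem _ (Or.inl (Set.mem_insert_of_mem _ h))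
          · exact Set.mem_insert_of_mem _ (Or.inr (mem_QAtoms_cons.2 (Or.inr h)))
    · simp only [List.length_cons, qsize_mapA, QCTL.qsize]
      omega
    · intro W K x
      rw [show (QCTL.qexi p φ).sat K x ↔
        ∃ K₁ : Kripke AP W, K.AgreeExcept K₁ p ∧ φ.sat K₁ x from Iff.rfl]
      rw [prefixQ_cons_true, sat_qexi]
      constructor
      · rintro ⟨K₁, hag, hsat⟩
        refine ⟨K.override p' {v | p ∈ K₁.label v}, agreeExcept_override K p' _, ?_⟩
        rw [prefix_comap hσ Q hfix M hqf]
        have hKM : (prefixQ Q M).sat K₁ x := (HQ W K₁ x).1 hsat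
        refine (sat_invar (prefixQ Q M) K₁ _ ?_ ?_ x).1 hKM
        · show (Kripke.comap σ (K.override p' _)).E = K₁.E
          rw [hag.1]; rfl
        · intro v q hq
          have hq' : q ≠ p' := by
            intro hc
            subst hc
            rcases atoms_prefixQ hq with h | h
            · exact hp''.2.2.2.2 h
            · exact hMp' h
          rw [mem_comap_label]
          by_cases hqp : q = p
          · rw [hqp, hσdef, Equiv.swap_apply_left, mem_override, if_pos rfl]
            simp
          · rw [hσdef, Equiv.swap_apply_of_ne_of_ne hqp hq', mem_override, if_neg hq']
            exact hag.2 v q hqp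
      · rintro ⟨K₂, hag, hsat⟩
        rw [prefix_comap hσ Q hfix M hqf] at hsat
        refine ⟨K.override p {v | p' ∈ K₂.label v}, agreeExcept_override K p _, ?_⟩
        refine (HQ W _ x).2 ?_
        refine (sat_invar (prefixQ Q M) (Kripke.comap σ K₂) _ ?_ ?_ x).1 hsat
        · show (K.override p _).E = (Kripke.comap σ K₂).E
          rw [override_E, comap_E, hag.1]
        · intro v q hq
          have hq' : q ≠ p' := by
            intro hc
            subst hc
            rcases atoms_prefixQ hq with h | h
            · exact hp''.2.2.2.2 h
            · exact hMp' h
          rw [mem_comap_label, mem_override]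
          by_cases hqp : q = p
          · rw [hqp, hσdef, Equiv.swap_apply_left, if_pos rfl]
            simp
          · rw [hσdef, Equiv.swap_apply_of_ne_of_ne hqp hq', if_neg hqp]
            exact hag.2 v q hq'
  | qEX φ ih =>
    intro F hF
    obtain ⟨Q, A, hqf, hQ, hA, hsize, HQ⟩ := ih F hF
    set U : Set AP := insert default (F ∪ φ.atoms ∪ QAtoms Q) with hUdef
    have hUfin : U.Finite :=
      (((hF.union (atoms_finite φ)).union (QAtoms_finite Q)).insert default)
    have hUmem : ∀ r, r ∉ U → r ≠ default ∧ r ∉ F ∧ r ∉ φ.atoms ∧ r ∉ QAtoms Q := by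
      intro r hr
      simp only [hUdef, Set.mem_insert_iff, Set.mem_union, not_or] at hr
      tauto
    have hAU : ∀ q ∈ A.atoms, q ∈ U := by
      intro q hq
      rcases Set.mem_insert_iff.1 (hA q hq) with h | h
      · exact Set.mem_insert_iff.2 (Or.inl h)
      · rcases h with h | h
        · simp only [hUdef, Set.mem_insert_iff, Set.mem_union]; tauto
        · simp only [hUdef, Set.mem_insert_iff, Set.mem_union]; tauto
    have hQU : ∀ q ∈ QAtoms Q, q ∈ U := by
      intro q hq
      simp only [hUdef, Set.mem_insert_iff, Set.mem_union]; tauto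
    have hφU : ∀ q ∈ φ.atoms, q ∈ U := by
      intro q hq
      simp only [hUdef, Set.mem_insert_iff, Set.mem_union]; tauto
    obtain ⟨m, hmU⟩ := exists_fresh1 hUfin
    obtain ⟨m', hm'⟩ := exists_fresh1 (hUfin.insert m)
    obtain ⟨m'', hm''⟩ := exists_fresh1 ((hUfin.insert m).insert m')
    have hm'2 : m' ≠ m ∧ m' ∉ U := by
      simp only [Set.mem_insert_iff, not_or] at hm'; tauto
    have hm''2 : m'' ≠ m' ∧ m'' ≠ m ∧ m'' ∉ U := by
      simp only [Set.mem_insert_iff, not_or] at hm''; tauto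
    obtain ⟨hm'm, hm'U⟩ := hm'2
    obtain ⟨hm''m', hm''m, hm''U⟩ := hm''2
    have Hm := hUmem m hmU
    have Hm' := hUmem m' hm'U
    have Hm'' := hUmem m'' hm''U
    refine ⟨(true, m) :: (false, m') :: (true, m'') :: Q,
      qand (qEX (QCTL.atom m)) (Gimpl m m' m'' A),
      quantFree_qand trivial (quantFree_Gimpl hqf), ?_, ?_, ?_, ?_⟩
    · intro q hq
      simp only [Set.mem_insert_iff, Set.mem_union, not_or,
        show (QCTL.qEX φ).atoms = φ.atoms from rfl]
      rcases mem_QAtoms_cons.1 hq with rfl | hq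
      · exact ⟨Hm.1, Hm.2.1, Hm.2.2.1⟩
      · rcases mem_QAtoms_cons.1 hq with rfl | hq
        · exact ⟨Hm'.1, Hm'.2.1, Hm'.2.2.1⟩
        · rcases mem_QAtoms_cons.1 hq with rfl | hq
          · exact ⟨Hm''.1, Hm''.2.1, Hm''.2.2.1⟩
          · have := hQ q hq
            simp only [Set.mem_insert_iff, Set.mem_union, not_or] at this
            tauto
    · intro q hq
      rw [atoms_qand] at hq
      have hmem : ∀ r, r ∈ QAtoms Q →
          r ∈ QAtoms ((true, m) :: (false, m') :: (true, m'') :: Q) := by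
        intro r hr
        exact mem_QAtoms_cons.2 (Or.inr (mem_QAtoms_cons.2 (Or.inr
          (mem_QAtoms_cons.2 (Or.inr hr)))))
      have hmmem : ∀ r, (r = m ∨ r = m' ∨ r = m'') →
          r ∈ QAtoms ((true, m) :: (false, m') :: (true, m'') :: Q) := by
        intro r hr
        rcases hr with rfl | rfl | rfl
        · exact mem_QAtoms_cons.2 (Or.inl rfl)
        · exact mem_QAtoms_cons.2 (Or.inr (mem_QAtoms_cons.2 (Or.inl rfl)))
        · exact mem_QAtoms_cons.2 (Or.inr (mem_QAtoms_cons.2 (Or.inr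
            (mem_QAtoms_cons.2 (Or.inl rfl)))))
      simp only [Set.mem_insert_iff, Set.mem_union]
      rcases hq with hq | hq
      · have : q = m := by
          simpa [QCTL.atoms] using hq
        exact Or.inr (Or.inr (hmmem _ (Or.inl this)))
      · have := atoms_Gimpl hq
        rcases this with h | h
        · simp only [Set.mem_insert_iff, Set.mem_singleton_iff] at h
          rcases h with rfl | rfl | rfl | rfl
          · exact Or.inl rfl
          · exact Or.inr (Or.inr (hmmem _ (Or.inl rfl)))
          · exact Or.inr (Or.inr (hmmem _ (Or.inr (Or.inl rfl))))
          · exact Or.inr (Or.inr (hmmem _ (Or.inr (Or.inr rfl))))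
        · rcases Set.mem_insert_iff.1 (hA q h) with h' | h'
          · exact Or.inl h'
          · rcases h' with h' | h'
            · exact Or.inr (Or.inl h')
            · exact Or.inr (Or.inr (hmem _ h'))
    · have hg := qsize_Gimpl (AP := AP) (m := m) (m' := m') (m'' := m'') (A := A)
      rw [qsize_qand]
      simp only [List.length_cons, QCTL.qsize]
      omega
    · intro W K x
      have HQW : ∀ (K' : Kripke AP W) (y : W), φ.sat K' y ↔ (prefixQ Q A).sat K' y :=
        fun K' y => HQ W K' y
      have hm'A : m' ∉ A.atoms := fun hc => hm'U (hAU m' hc)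
      have hm''A : m'' ∉ A.atoms := fun hc => hm''U (hAU m'' hc)
      have hmQ : m ∉ QAtoms Q := fun hc => hmU (hQU m hc)
      have hm'Q : m' ∉ QAtoms Q := fun hc => hm'U (hQU m' hc)
      have hm''Q : m'' ∉ QAtoms Q := fun hc => hm''U (hQU m'' hc)
      have hmφ : m ∉ φ.atoms := fun hc => hmU (hφU m hc)
      have hCdisj : ∀ q ∈ (qEX (QCTL.atom m)).atoms,
          q ∉ QAtoms ((false, m') :: (true, m'') :: Q) := by
        intro q hq
        have hqm : q = m := by simpa [QCTL.atoms] using hq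
        subst hqm
        intro hc
        rcases mem_QAtoms_cons.1 hc with h | hc2
        · exact hm'm h.symm
        · rcases mem_QAtoms_cons.1 hc2 with h | h
          · exact hm''m h.symm
          · exact hmQ h
      have key : ∀ K₁ : Kripke AP W,
          ((prefixQ ((false, m') :: (true, m'') :: Q)
            (qand (qEX (QCTL.atom m)) (Gimpl m m' m'' A))).sat K₁ x ↔
          ((qEX (QCTL.atom m)).sat K₁ x ∧
            ∀ v, KReach K₁ x v → m ∈ K₁.label v → φ.sat K₁ v)) := by
        intro K₁
        rw [prefix_and hCdisj]
        exact and_congr Iff.rfl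
          (blockChar hm'm.symm hm''m.symm hm''m'.symm hmQ hm'Q hm''Q hm'A hm''A HQW K₁ x)
      rw [semEX hmφ K x]
      rw [prefixQ_cons_true, sat_qexi]
      exact exists_congr fun K₁ => and_congr_right fun _ => (key K₁).symm
  | qEU φ χ ihφ ihχ =>
    intro F hF
    obtain ⟨Q₁, A, hqf1, hQ1, hA, hsize1, HQ1⟩ := ihφ (F ∪ χ.atoms) (hF.union (atoms_finite χ))
    obtain ⟨Q₂, B, hqf2, hQ2, hB, hsize2, HQ2⟩ :=
      ihχ (F ∪ φ.atoms ∪ QAtoms Q₁) ((hF.union (atoms_finite φ)).union (QAtoms_finite Q₁))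
    have hQ1' : ∀ q ∈ QAtoms Q₁, q ≠ default ∧ q ∉ F ∧ q ∉ φ.atoms ∧ q ∉ χ.atoms := by
      intro q hq
      have := hQ1 q hq
      simp only [Set.mem_insert_iff, Set.mem_union, not_or] at this
      tauto
    have hQ2' : ∀ q ∈ QAtoms Q₂,
        q ≠ default ∧ q ∉ F ∧ q ∉ φ.atoms ∧ q ∉ χ.atoms ∧ q ∉ QAtoms Q₁ := by
      intro q hq
      have := hQ2 q hq
      simp only [Set.mem_insert_iff, Set.mem_union, not_or] at this
      tauto
    set U : Set AP :=
      insert default (F ∪ φ.atoms ∪ χ.atoms ∪ QAtoms Q₁ ∪ QAtoms Q₂) with hUdef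
    have hUfin : U.Finite :=
      (((((hF.union (atoms_finite φ)).union (atoms_finite χ)).union
        (QAtoms_finite Q₁)).union (QAtoms_finite Q₂)).insert default)
    have hUmem : ∀ r, r ∉ U → r ≠ default ∧ r ∉ F ∧ r ∉ φ.atoms ∧ r ∉ χ.atoms ∧
        r ∉ QAtoms Q₁ ∧ r ∉ QAtoms Q₂ := by
      intro r hr
      simp only [hUdef, Set.mem_insert_iff, Set.mem_union, not_or] at hr
      tauto
    have hin : ∀ r, (r = default ∨ r ∈ φ.atoms ∨ r ∈ χ.atoms ∨ r ∈ QAtoms Q₁ ∨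
        r ∈ QAtoms Q₂) → r ∈ U := by
      intro r hr
      simp only [hUdef, Set.mem_insert_iff, Set.mem_union]
      tauto
    have hAU : ∀ q ∈ A.atoms, q ∈ U := by
      intro q hq
      rcases Set.mem_insert_iff.1 (hA q hq) with h | h
      · exact hin q (Or.inl h)
      · rcases h with h | h
        · exact hin q (Or.inr (Or.inl h))
        · exact hin q (Or.inr (Or.inr (Or.inr (Or.inl h))))
    have hBU : ∀ q ∈ B.atoms, q ∈ U := by
      intro q hq
      rcases Set.mem_insert_iff.1 (hB q hq) with h | h
      · exact hin q (Or.inl h)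
      · rcases h with h | h
        · exact hin q (Or.inr (Or.inr (Or.inl h)))
        · exact hin q (Or.inr (Or.inr (Or.inr (Or.inr h))))
    obtain ⟨z, hzU⟩ := exists_fresh1 hUfin
    obtain ⟨w, hw⟩ := exists_fresh1 (hUfin.insert z)
    obtain ⟨z', hz'⟩ := exists_fresh1 ((hUfin.insert z).insert w)
    obtain ⟨z'', hz''⟩ := exists_fresh1 (((hUfin.insert z).insert w).insert z')
    obtain ⟨w', hw'⟩ := exists_fresh1 ((((hUfin.insert z).insert w).insert z').insert z'')
    obtain ⟨w'', hw''⟩ :=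
      exists_fresh1 (((((hUfin.insert z).insert w).insert z').insert z'').insert w')
    have hw2 : w ≠ z ∧ w ∉ U := by
      simp only [Set.mem_insert_iff, not_or] at hw; tauto
    have hz'2 : z' ≠ w ∧ z' ≠ z ∧ z' ∉ U := by
      simp only [Set.mem_insert_iff, not_or] at hz'; tauto
    have hz''2 : z'' ≠ z' ∧ z'' ≠ w ∧ z'' ≠ z ∧ z'' ∉ U := by
      simp only [Set.mem_insert_iff, not_or] at hz''; tauto
    have hw'2 : w' ≠ z'' ∧ w' ≠ z' ∧ w' ≠ w ∧ w' ≠ z ∧ w' ∉ U := by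
      simp only [Set.mem_insert_iff, not_or] at hw'; tauto
    have hw''2 : w'' ≠ w' ∧ w'' ≠ z'' ∧ w'' ≠ z' ∧ w'' ≠ w ∧ w'' ≠ z ∧ w'' ∉ U := by
      simp only [Set.mem_insert_iff, not_or] at hw''; tauto
    obtain ⟨hwz, hwU⟩ := hw2
    obtain ⟨hz'w, hz'z, hz'U⟩ := hz'2
    obtain ⟨hz''z', hz''w, hz''z, hz''U⟩ := hz''2
    obtain ⟨hw'z'', hw'z', hw'w, hw'z, hw'U⟩ := hw'2
    obtain ⟨hw''w', hw''z'', hw''z', hw''w, hw''z, hw''U⟩ := hw''2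
    have Hz := hUmem z hzU
    have Hw := hUmem w hwU
    have Hz' := hUmem z' hz'U
    have Hz'' := hUmem z'' hz''U
    have Hw' := hUmem w' hw'U
    have Hw'' := hUmem w'' hw''U
    refine ⟨(true, z) :: (true, w) ::
        (((false, z') :: (true, z'') :: Q₁) ++ ((false, w') :: (true, w'') :: Q₂)),
      qand (qand (qEU (QCTL.atom z) (QCTL.atom w)) (Gimpl z z' z'' A)) (Gimpl w w' w'' B),
      ?_, ?_, ?_, ?_, ?_⟩
    · exact quantFree_qand (quantFree_qand ⟨trivial, trivial⟩ (quantFree_Gimpl hqf1))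
        (quantFree_Gimpl hqf2)
    · intro q hq
      have hq' : q = z ∨ q = w ∨ q = z' ∨ q = z'' ∨ q ∈ QAtoms Q₁ ∨
          q = w' ∨ q = w'' ∨ q ∈ QAtoms Q₂ := by
        rcases mem_QAtoms_cons.1 hq with h | hq2
        · exact Or.inl h
        · rcases mem_QAtoms_cons.1 hq2 with h | hq3
          · exact Or.inr (Or.inl h)
          · rw [QAtoms_append] at hq3
            rcases hq3 with hq4 | hq4
            · rcases mem_QAtoms_cons.1 hq4 with h | hq5
              · exact Or.inr (Or.inr (Or.inl h))
              · rcases mem_QAtoms_cons.1 hq5 with h | h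
                · exact Or.inr (Or.inr (Or.inr (Or.inl h)))
                · exact Or.inr (Or.inr (Or.inr (Or.inr (Or.inl h))))
            · rcases mem_QAtoms_cons.1 hq4 with h | hq5
              · exact Or.inr (Or.inr (Or.inr (Or.inr (Or.inr (Or.inl h)))))
              · rcases mem_QAtoms_cons.1 hq5 with h | h
                · exact Or.inr (Or.inr (Or.inr (Or.inr (Or.inr (Or.inr (Or.inl h))))))
                · exact Or.inr (Or.inr (Or.inr (Or.inr (Or.inr (Or.inr (Or.inr h))))))
      simp only [Set.mem_insert_iff, Set.mem_union, not_or,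
        show (QCTL.qEU φ χ).atoms = φ.atoms ∪ χ.atoms from rfl]
      rcases hq' with rfl | rfl | rfl | rfl | h | rfl | rfl | h
      · exact ⟨Hz.1, Hz.2.1, Hz.2.2.1, Hz.2.2.2.1⟩
      · exact ⟨Hw.1, Hw.2.1, Hw.2.2.1, Hw.2.2.2.1⟩
      · exact ⟨Hz'.1, Hz'.2.1, Hz'.2.2.1, Hz'.2.2.2.1⟩
      · exact ⟨Hz''.1, Hz''.2.1, Hz''.2.2.1, Hz''.2.2.2.1⟩
      · have := hQ1' q h; tauto
      · exact ⟨Hw'.1, Hw'.2.1, Hw'.2.2.1, Hw'.2.2.2.1⟩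
      · exact ⟨Hw''.1, Hw''.2.1, Hw''.2.2.1, Hw''.2.2.2.1⟩
      · have := hQ2' q h; tauto
    · intro q hq
      have hmark : ∀ r, (r = z ∨ r = w ∨ r = z' ∨ r = z'' ∨ r ∈ QAtoms Q₁ ∨
          r = w' ∨ r = w'' ∨ r ∈ QAtoms Q₂) →
          r ∈ QAtoms ((true, z) :: (true, w) ::
            (((false, z') :: (true, z'') :: Q₁) ++ ((false, w') :: (true, w'') :: Q₂))) := by
        intro r hr
        rw [mem_QAtoms_cons, mem_QAtoms_cons, QAtoms_append]
        rcases hr with h | h | h | h | h | h | h | h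
        · exact Or.inl h
        · exact Or.inr (Or.inl h)
        · exact Or.inr (Or.inr (Or.inl (mem_QAtoms_cons.2 (Or.inl h))))
        · exact Or.inr (Or.inr (Or.inl (mem_QAtoms_cons.2 (Or.inr (mem_QAtoms_cons.2 (Or.inl h))))))
        · exact Or.inr (Or.inr (Or.inl (mem_QAtoms_cons.2 (Or.inr (mem_QAtoms_cons.2 (Or.inr h))))))
        · exact Or.inr (Or.inr (Or.inr (mem_QAtoms_cons.2 (Or.inl h))))
        · exact Or.inr (Or.inr (Or.inr (mem_QAtoms_cons.2 (Or.inr (mem_QAtoms_cons.2 (Or.inl h))))))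
        · exact Or.inr (Or.inr (Or.inr (mem_QAtoms_cons.2 (Or.inr (mem_QAtoms_cons.2 (Or.inr h))))))
      simp only [Set.mem_insert_iff, Set.mem_union,
        show (QCTL.qEU φ χ).atoms = φ.atoms ∪ χ.atoms from rfl]
      rw [atoms_qand, atoms_qand] at hq
      rcases hq with (hq | hq) | hq
      · have : q = z ∨ q = w := by
          rcases hq with h | h
          · exact Or.inl (by simpa [QCTL.atoms] using h)
          · exact Or.inr (by simpa [QCTL.atoms] using h)
        rcases this with rfl | rfl
        · exact Or.inr (Or.inr (hmark _ (Or.inl rfl)))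
        · exact Or.inr (Or.inr (hmark _ (Or.inr (Or.inl rfl))))
      · rcases atoms_Gimpl hq with h | h
        · simp only [Set.mem_insert_iff, Set.mem_singleton_iff] at h
          rcases h with rfl | rfl | rfl | rfl
          · exact Or.inl rfl
          · exact Or.inr (Or.inr (hmark _ (Or.inl rfl)))
          · exact Or.inr (Or.inr (hmark _ (Or.inr (Or.inr (Or.inl rfl)))))
          · exact Or.inr (Or.inr (hmark _ (Or.inr (Or.inr (Or.inr (Or.inl rfl))))))
        · rcases Set.mem_insert_iff.1 (hA q h) with h' | h'
          · exact Or.inl h'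
          · rcases h' with h' | h'
            · exact Or.inr (Or.inl (Or.inl h'))
            · exact Or.inr (Or.inr (hmark _ (Or.inr (Or.inr (Or.inr (Or.inr (Or.inl h')))))))
      · rcases atoms_Gimpl hq with h | h
        · simp only [Set.mem_insert_iff, Set.mem_singleton_iff] at h
          rcases h with rfl | rfl | rfl | rfl
          · exact Or.inl rfl
          · exact Or.inr (Or.inr (hmark _ (Or.inr (Or.inl rfl))))
          · exact Or.inr (Or.inr (hmark _ (Or.inr (Or.inr (Or.inr (Or.inr (Or.inr (Or.inl rfl))))))))
          · exact Or.inr (Or.inr (hmark _ (Or.inr (Or.inr (Or.inr (Or.inr (Or.inr (Or.inr (Or.inl rfl)))))))))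
        · rcases Set.mem_insert_iff.1 (hB q h) with h' | h'
          · exact Or.inl h'
          · rcases h' with h' | h'
            · exact Or.inr (Or.inl (Or.inr h'))
            · exact Or.inr (Or.inr (hmark _ (Or.inr (Or.inr (Or.inr (Or.inr (Or.inr (Or.inr (Or.inr h')))))))))
    · have hg1 := qsize_Gimpl (AP := AP) (m := z) (m' := z') (m'' := z'') (A := A)
      have hg2 := qsize_Gimpl (AP := AP) (m := w) (m' := w') (m'' := w'') (A := B)
      rw [qsize_qand, qsize_qand]
      simp only [List.length_cons, List.length_append, QCTL.qsize]
      omega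
    · intro W K x
      have HQ1W : ∀ (K' : Kripke AP W) (y : W), φ.sat K' y ↔ (prefixQ Q₁ A).sat K' y :=
        fun K' y => HQ1 W K' y
      have HQ2W : ∀ (K' : Kripke AP W) (y : W), χ.sat K' y ↔ (prefixQ Q₂ B).sat K' y :=
        fun K' y => HQ2 W K' y
      have hz'A : z' ∉ A.atoms := fun hc => hz'U (hAU z' hc)
      have hz''A : z'' ∉ A.atoms := fun hc => hz''U (hAU z'' hc)
      have hw'B : w' ∉ B.atoms := fun hc => hw'U (hBU w' hc)
      have hw''B : w'' ∉ B.atoms := fun hc => hw''U (hBU w'' hc)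
      have hzQ1 : z ∉ QAtoms Q₁ := Hz.2.2.2.2.1
      have hz'Q1 : z' ∉ QAtoms Q₁ := Hz'.2.2.2.2.1
      have hz''Q1 : z'' ∉ QAtoms Q₁ := Hz''.2.2.2.2.1
      have hwQ2 : w ∉ QAtoms Q₂ := Hw.2.2.2.2.2
      have hw'Q2 : w' ∉ QAtoms Q₂ := Hw'.2.2.2.2.2
      have hw''Q2 : w'' ∉ QAtoms Q₂ := Hw''.2.2.2.2.2
      set B1 : List (Bool × AP) := (false, z') :: (true, z'') :: Q₁ with hB1
      set B2 : List (Bool × AP) := (false, w') :: (true, w'') :: Q₂ with hB2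
      set GZ : QCTL AP := Gimpl z z' z'' A with hGZ
      set GW : QCTL AP := Gimpl w w' w'' B with hGW
      set op : QCTL AP := qEU (QCTL.atom z) (QCTL.atom w) with hop
      have hB2mem : ∀ q, q ∈ QAtoms B2 → q = w' ∨ q = w'' ∨ q ∈ QAtoms Q₂ := by
        intro q hc
        rcases mem_QAtoms_cons.1 hc with h | hc2
        · exact Or.inl h
        · rcases mem_QAtoms_cons.1 hc2 with h | h
          · exact Or.inr (Or.inl h)
          · exact Or.inr (Or.inr h)
      have hB1mem : ∀ q, q ∈ QAtoms B1 → q = z' ∨ q = z'' ∨ q ∈ QAtoms Q₁ := by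
        intro q hc
        rcases mem_QAtoms_cons.1 hc with h | hc2
        · exact Or.inl h
        · rcases mem_QAtoms_cons.1 hc2 with h | h
          · exact Or.inr (Or.inl h)
          · exact Or.inr (Or.inr h)
      have hC2 : ∀ q ∈ (qand op GZ).atoms, q ∉ QAtoms B2 := by
        intro q hq hc
        have hq' : (q = z ∨ q = w ∨ q = z' ∨ q = z'') ∨ q ∈ U := by
          rw [atoms_qand] at hq
          rcases hq with hq | hq
          · rcases hq with h | h
            · exact Or.inl (Or.inl (by simpa [QCTL.atoms] using h))
            · exact Or.inl (Or.inr (Or.inl (by simpa [QCTL.atoms] using h)))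
          · rcases atoms_Gimpl hq with h | h
            · simp only [Set.mem_insert_iff, Set.mem_singleton_iff] at h
              rcases h with rfl | rfl | rfl | rfl
              · exact Or.inr (hin _ (Or.inl rfl))
              · exact Or.inl (Or.inl rfl)
              · exact Or.inl (Or.inr (Or.inr (Or.inl rfl)))
              · exact Or.inl (Or.inr (Or.inr (Or.inr rfl)))
            · exact Or.inr (hAU q h)
        rcases hB2mem q hc with rfl | rfl | hc2
        · rcases hq' with (rfl | rfl | rfl | rfl) | hq'
          · exact hw'z rfl
          · exact hw'w rfl
          · exact hw'z' rfl
          · exact hw'z'' rfl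
          · exact hw'U hq'
        · rcases hq' with (rfl | rfl | rfl | rfl) | hq'
          · exact hw''z rfl
          · exact hw''w rfl
          · exact hw''z' rfl
          · exact hw''z'' rfl
          · exact hw''U hq'
        · rcases hq' with (rfl | rfl | rfl | rfl) | hq'
          · exact Hz.2.2.2.2.2 hc2
          · exact hwQ2 hc2
          · exact Hz'.2.2.2.2.2 hc2
          · exact Hz''.2.2.2.2.2 hc2
          · -- q ∈ U and q ∈ QAtoms Q₂; U-members in A-atoms scope:
            -- need finer: q ∈ atoms(op∧GZ) means q ∈ {default} ∪ atoms A (other cases covered)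
            -- atoms A ⊆ insert default (φ.atoms ∪ QAtoms Q₁), disjoint from Q₂
            rw [atoms_qand] at hq
            rcases hq with hq | hq
            · have : q = z ∨ q = w := by
                rcases hq with h | h
                · exact Or.inl (by simpa [QCTL.atoms] using h)
                · exact Or.inr (by simpa [QCTL.atoms] using h)
              rcases this with rfl | rfl
              · exact Hz.2.2.2.2.2 hc2
              · exact hwQ2 hc2
            · rcases atoms_Gimpl hq with h | h
              · simp only [Set.mem_insert_iff, Set.mem_singleton_iff] at h
                rcases h with rfl | rfl | rfl | rfl
                · exact (hQ2' _ hc2).1 rfl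
                · exact Hz.2.2.2.2.2 hc2
                · exact Hz'.2.2.2.2.2 hc2
                · exact Hz''.2.2.2.2.2 hc2
              · rcases Set.mem_insert_iff.1 (hA q h) with h' | h'
                · exact (hQ2' q hc2).1 h'
                · rcases h' with h' | h'
                  · exact (hQ2' q hc2).2.2.1 h'
                  · exact (hQ2' q hc2).2.2.2.2 h'
      have hC1 : ∀ q ∈ (qand op (prefixQ B2 GW)).atoms, q ∉ QAtoms B1 := by
        intro q hq hc
        have hq' : (q = z ∨ q = w ∨ q = w' ∨ q = w'' ∨ q ∈ QAtoms Q₂ ∨ q = default ∨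
            q ∈ χ.atoms) := by
          rw [atoms_qand] at hq
          rcases hq with hq | hq
          · rcases hq with h | h
            · exact Or.inl (by simpa [QCTL.atoms] using h)
            · exact Or.inr (Or.inl (by simpa [QCTL.atoms] using h))
          · rcases atoms_prefixQ hq with h | h
            · rcases hB2mem q h with h' | h' | h'
              · exact Or.inr (Or.inr (Or.inl h'))
              · exact Or.inr (Or.inr (Or.inr (Or.inl h')))
              · exact Or.inr (Or.inr (Or.inr (Or.inr (Or.inl h'))))
            · rcases atoms_Gimpl h with h' | h'
              · simp only [Set.mem_insert_iff, Set.mem_singleton_iff] at h'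
                rcases h' with rfl | rfl | rfl | rfl
                · exact Or.inr (Or.inr (Or.inr (Or.inr (Or.inr (Or.inl rfl)))))
                · exact Or.inr (Or.inl rfl)
                · exact Or.inr (Or.inr (Or.inl rfl))
                · exact Or.inr (Or.inr (Or.inr (Or.inl rfl)))
              · rcases Set.mem_insert_iff.1 (hB q h') with h'' | h''
                · exact Or.inr (Or.inr (Or.inr (Or.inr (Or.inr (Or.inl h'')))))
                · rcases h'' with h'' | h''
                  · exact Or.inr (Or.inr (Or.inr (Or.inr (Or.inr (Or.inr h'')))))
                  · exact Or.inr (Or.inr (Or.inr (Or.inr (Or.inl h''))))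
        rcases hB1mem q hc with rfl | rfl | hc1
        · rcases hq' with rfl | rfl | rfl | rfl | h | rfl | h
          · exact hz'z rfl
          · exact hz'w rfl
          · exact hw'z' rfl.symm
          · exact hw''z' rfl.symm
          · exact Hz'.2.2.2.2.2 h
          · exact Hz'.1 rfl
          · exact Hz'.2.2.2.1 h
        · rcases hq' with rfl | rfl | rfl | rfl | h | rfl | h
          · exact hz''z rfl
          · exact hz''w rfl
          · exact hw'z'' rfl.symm
          · exact hw''z'' rfl.symm
          · exact Hz''.2.2.2.2.2 h
          · exact Hz''.1 rfl
          · exact Hz''.2.2.2.1 h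
        · rcases hq' with rfl | rfl | rfl | rfl | h | rfl | h
          · exact hzQ1 hc1
          · exact Hw.2.2.2.2.1 hc1
          · exact Hw'.2.2.2.2.1 hc1
          · exact Hw''.2.2.2.2.1 hc1
          · exact (hQ2' q h).2.2.2.2 hc1
          · exact (hQ1' _ hc1).1 rfl
          · exact (hQ1' q hc1).2.2.2 h
      have hbcZ : ∀ K₂ : Kripke AP W, ((prefixQ B1 GZ).sat K₂ x ↔
          ∀ v, KReach K₂ x v → z ∈ K₂.label v → φ.sat K₂ v) := by
        intro K₂
        exact blockChar hz'z.symm hz''z.symm hz''z'.symm Hz.2.2.2.2.1 hz'Q1 hz''Q1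
          hz'A hz''A HQ1W K₂ x
      have hbcW : ∀ K₂ : Kripke AP W, ((prefixQ B2 GW).sat K₂ x ↔
          ∀ v, KReach K₂ x v → w ∈ K₂.label v → χ.sat K₂ v) := by
        intro K₂
        exact blockChar hw'w.symm hw''w.symm hw''w'.symm hwQ2 hw'Q2 hw''Q2
          hw'B hw''B HQ2W K₂ x
      have key : ∀ K₂ : Kripke AP W,
          ((prefixQ (B1 ++ B2) (qand (qand op GZ) GW)).sat K₂ x ↔
          (op.sat K₂ x ∧ (∀ v, KReach K₂ x v → z ∈ K₂.label v → φ.sat K₂ v) ∧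
            (∀ v, KReach K₂ x v → w ∈ K₂.label v → χ.sat K₂ v))) := by
        intro K₂
        rw [prefixQ_append]
        have step1 : ((prefixQ B1 (prefixQ B2 (qand (qand op GZ) GW))).sat K₂ x ↔
            (prefixQ B1 (qand (qand op (prefixQ B2 GW)) GZ)).sat K₂ x) := by
          refine prefix_congr ?_
          intro K' _
          rw [prefix_and hC2, sat_qand, sat_qand, sat_qand]
          tauto
        rw [step1, prefix_and hC1, sat_qand, hbcZ K₂, hbcW K₂]
        tauto
      rw [semEU Hz.2.2.1 Hz.2.2.2.1 Hw.2.2.1 Hw.2.2.2.1 (fun h => hwz h.symm) K x]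
      rw [prefixQ_cons_true, sat_qexi]
      refine exists_congr fun K₁ => and_congr_right fun _ => ?_
      rw [prefixQ_cons_true, sat_qexi]
      refine exists_congr fun K₂ => and_congr_right fun _ => ?_
      exact (key K₂).symm
  | qAU φ χ ihφ ihχ =>
    intro F hF
    obtain ⟨Q₁, A, hqf1, hQ1, hA, hsize1, HQ1⟩ := ihφ (F ∪ χ.atoms) (hF.union (atoms_finite χ))
    obtain ⟨Q₂, B, hqf2, hQ2, hB, hsize2, HQ2⟩ :=
      ihχ (F ∪ φ.atoms ∪ QAtoms Q₁) ((hF.union (atoms_finite φ)).union (QAtoms_finite Q₁))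
    have hQ1' : ∀ q ∈ QAtoms Q₁, q ≠ default ∧ q ∉ F ∧ q ∉ φ.atoms ∧ q ∉ χ.atoms := by
      intro q hq
      have := hQ1 q hq
      simp only [Set.mem_insert_iff, Set.mem_union, not_or] at this
      tauto
    have hQ2' : ∀ q ∈ QAtoms Q₂,
        q ≠ default ∧ q ∉ F ∧ q ∉ φ.atoms ∧ q ∉ χ.atoms ∧ q ∉ QAtoms Q₁ := by
      intro q hq
      have := hQ2 q hq
      simp only [Set.mem_insert_iff, Set.mem_union, not_or] at this
      tauto
    set U : Set AP :=
      insert default (F ∪ φ.atoms ∪ χ.atoms ∪ QAtoms Q₁ ∪ QAtoms Q₂) with hUdef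
    have hUfin : U.Finite :=
      (((((hF.union (atoms_finite φ)).union (atoms_finite χ)).union
        (QAtoms_finite Q₁)).union (QAtoms_finite Q₂)).insert default)
    have hUmem : ∀ r, r ∉ U → r ≠ default ∧ r ∉ F ∧ r ∉ φ.atoms ∧ r ∉ χ.atoms ∧
        r ∉ QAtoms Q₁ ∧ r ∉ QAtoms Q₂ := by
      intro r hr
      simp only [hUdef, Set.mem_insert_iff, Set.mem_union, not_or] at hr
      tauto
    have hin : ∀ r, (r = default ∨ r ∈ φ.atoms ∨ r ∈ χ.atoms ∨ r ∈ QAtoms Q₁ ∨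
        r ∈ QAtoms Q₂) → r ∈ U := by
      intro r hr
      simp only [hUdef, Set.mem_insert_iff, Set.mem_union]
      tauto
    have hAU : ∀ q ∈ A.atoms, q ∈ U := by
      intro q hq
      rcases Set.mem_insert_iff.1 (hA q hq) with h | h
      · exact hin q (Or.inl h)
      · rcases h with h | h
        · exact hin q (Or.inr (Or.inl h))
        · exact hin q (Or.inr (Or.inr (Or.inr (Or.inl h))))
    have hBU : ∀ q ∈ B.atoms, q ∈ U := by
      intro q hq
      rcases Set.mem_insert_iff.1 (hB q hq) with h | h
      · exact hin q (Or.inl h)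
      · rcases h with h | h
        · exact hin q (Or.inr (Or.inr (Or.inl h)))
        · exact hin q (Or.inr (Or.inr (Or.inr (Or.inr h))))
    obtain ⟨z, hzU⟩ := exists_fresh1 hUfin
    obtain ⟨w, hw⟩ := exists_fresh1 (hUfin.insert z)
    obtain ⟨z', hz'⟩ := exists_fresh1 ((hUfin.insert z).insert w)
    obtain ⟨z'', hz''⟩ := exists_fresh1 (((hUfin.insert z).insert w).insert z')
    obtain ⟨w', hw'⟩ := exists_fresh1 ((((hUfin.insert z).insert w).insert z').insert z'')
    obtain ⟨w'', hw''⟩ :=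
      exists_fresh1 (((((hUfin.insert z).insert w).insert z').insert z'').insert w')
    have hw2 : w ≠ z ∧ w ∉ U := by
      simp only [Set.mem_insert_iff, not_or] at hw; tauto
    have hz'2 : z' ≠ w ∧ z' ≠ z ∧ z' ∉ U := by
      simp only [Set.mem_insert_iff, not_or] at hz'; tauto
    have hz''2 : z'' ≠ z' ∧ z'' ≠ w ∧ z'' ≠ z ∧ z'' ∉ U := by
      simp only [Set.mem_insert_iff, not_or] at hz''; tauto
    have hw'2 : w' ≠ z'' ∧ w' ≠ z' ∧ w' ≠ w ∧ w' ≠ z ∧ w' ∉ U := by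
      simp only [Set.mem_insert_iff, not_or] at hw'; tauto
    have hw''2 : w'' ≠ w' ∧ w'' ≠ z'' ∧ w'' ≠ z' ∧ w'' ≠ w ∧ w'' ≠ z ∧ w'' ∉ U := by
      simp only [Set.mem_insert_iff, not_or] at hw''; tauto
    obtain ⟨hwz, hwU⟩ := hw2
    obtain ⟨hz'w, hz'z, hz'U⟩ := hz'2
    obtain ⟨hz''z', hz''w, hz''z, hz''U⟩ := hz''2
    obtain ⟨hw'z'', hw'z', hw'w, hw'z, hw'U⟩ := hw'2
    obtain ⟨hw''w', hw''z'', hw''z', hw''w, hw''z, hw''U⟩ := hw''2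
    have Hz := hUmem z hzU
    have Hw := hUmem w hwU
    have Hz' := hUmem z' hz'U
    have Hz'' := hUmem z'' hz''U
    have Hw' := hUmem w' hw'U
    have Hw'' := hUmem w'' hw''U
    refine ⟨(true, z) :: (true, w) ::
        (((false, z') :: (true, z'') :: Q₁) ++ ((false, w') :: (true, w'') :: Q₂)),
      qand (qand (qAU (QCTL.atom z) (QCTL.atom w)) (Gimpl z z' z'' A)) (Gimpl w w' w'' B),
      ?_, ?_, ?_, ?_, ?_⟩
    · exact quantFree_qand (quantFree_qand ⟨trivial, trivial⟩ (quantFree_Gimpl hqf1))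
        (quantFree_Gimpl hqf2)
    · intro q hq
      have hq' : q = z ∨ q = w ∨ q = z' ∨ q = z'' ∨ q ∈ QAtoms Q₁ ∨
          q = w' ∨ q = w'' ∨ q ∈ QAtoms Q₂ := by
        rcases mem_QAtoms_cons.1 hq with h | hq2
        · exact Or.inl h
        · rcases mem_QAtoms_cons.1 hq2 with h | hq3
          · exact Or.inr (Or.inl h)
          · rw [QAtoms_append] at hq3
            rcases hq3 with hq4 | hq4
            · rcases mem_QAtoms_cons.1 hq4 with h | hq5
              · exact Or.inr (Or.inr (Or.inl h))
              · rcases mem_QAtoms_cons.1 hq5 with h | h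
                · exact Or.inr (Or.inr (Or.inr (Or.inl h)))
                · exact Or.inr (Or.inr (Or.inr (Or.inr (Or.inl h))))
            · rcases mem_QAtoms_cons.1 hq4 with h | hq5
              · exact Or.inr (Or.inr (Or.inr (Or.inr (Or.inr (Or.inl h)))))
              · rcases mem_QAtoms_cons.1 hq5 with h | h
                · exact Or.inr (Or.inr (Or.inr (Or.inr (Or.inr (Or.inr (Or.inl h))))))
                · exact Or.inr (Or.inr (Or.inr (Or.inr (Or.inr (Or.inr (Or.inr h))))))
      simp only [Set.mem_insert_iff, Set.mem_union, not_or,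
        show (QCTL.qAU φ χ).atoms = φ.atoms ∪ χ.atoms from rfl]
      rcases hq' with rfl | rfl | rfl | rfl | h | rfl | rfl | h
      · exact ⟨Hz.1, Hz.2.1, Hz.2.2.1, Hz.2.2.2.1⟩
      · exact ⟨Hw.1, Hw.2.1, Hw.2.2.1, Hw.2.2.2.1⟩
      · exact ⟨Hz'.1, Hz'.2.1, Hz'.2.2.1, Hz'.2.2.2.1⟩
      · exact ⟨Hz''.1, Hz''.2.1, Hz''.2.2.1, Hz''.2.2.2.1⟩
      · have := hQ1' q h; tauto
      · exact ⟨Hw'.1, Hw'.2.1, Hw'.2.2.1, Hw'.2.2.2.1⟩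
      · exact ⟨Hw''.1, Hw''.2.1, Hw''.2.2.1, Hw''.2.2.2.1⟩
      · have := hQ2' q h; tauto
    · intro q hq
      have hmark : ∀ r, (r = z ∨ r = w ∨ r = z' ∨ r = z'' ∨ r ∈ QAtoms Q₁ ∨
          r = w' ∨ r = w'' ∨ r ∈ QAtoms Q₂) →
          r ∈ QAtoms ((true, z) :: (true, w) ::
            (((false, z') :: (true, z'') :: Q₁) ++ ((false, w') :: (true, w'') :: Q₂))) := by
        intro r hr
        rw [mem_QAtoms_cons, mem_QAtoms_cons, QAtoms_append]
        rcases hr with h | h | h | h | h | h | h | h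
        · exact Or.inl h
        · exact Or.inr (Or.inl h)
        · exact Or.inr (Or.inr (Or.inl (mem_QAtoms_cons.2 (Or.inl h))))
        · exact Or.inr (Or.inr (Or.inl (mem_QAtoms_cons.2 (Or.inr (mem_QAtoms_cons.2 (Or.inl h))))))
        · exact Or.inr (Or.inr (Or.inl (mem_QAtoms_cons.2 (Or.inr (mem_QAtoms_cons.2 (Or.inr h))))))
        · exact Or.inr (Or.inr (Or.inr (mem_QAtoms_cons.2 (Or.inl h))))
        · exact Or.inr (Or.inr (Or.inr (mem_QAtoms_cons.2 (Or.inr (mem_QAtoms_cons.2 (Or.inl h))))))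
        · exact Or.inr (Or.inr (Or.inr (mem_QAtoms_cons.2 (Or.inr (mem_QAtoms_cons.2 (Or.inr h))))))
      simp only [Set.mem_insert_iff, Set.mem_union,
        show (QCTL.qAU φ χ).atoms = φ.atoms ∪ χ.atoms from rfl]
      rw [atoms_qand, atoms_qand] at hq
      rcases hq with (hq | hq) | hq
      · have : q = z ∨ q = w := by
          rcases hq with h | h
          · exact Or.inl (by simpa [QCTL.atoms] using h)
          · exact Or.inr (by simpa [QCTL.atoms] using h)
        rcases this with rfl | rfl
        · exact Or.inr (Or.inr (hmark _ (Or.inl rfl)))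
        · exact Or.inr (Or.inr (hmark _ (Or.inr (Or.inl rfl))))
      · rcases atoms_Gimpl hq with h | h
        · simp only [Set.mem_insert_iff, Set.mem_singleton_iff] at h
          rcases h with rfl | rfl | rfl | rfl
          · exact Or.inl rfl
          · exact Or.inr (Or.inr (hmark _ (Or.inl rfl)))
          · exact Or.inr (Or.inr (hmark _ (Or.inr (Or.inr (Or.inl rfl)))))
          · exact Or.inr (Or.inr (hmark _ (Or.inr (Or.inr (Or.inr (Or.inl rfl))))))
        · rcases Set.mem_insert_iff.1 (hA q h) with h' | h'
          · exact Or.inl h'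
          · rcases h' with h' | h'
            · exact Or.inr (Or.inl (Or.inl h'))
            · exact Or.inr (Or.inr (hmark _ (Or.inr (Or.inr (Or.inr (Or.inr (Or.inl h')))))))
      · rcases atoms_Gimpl hq with h | h
        · simp only [Set.mem_insert_iff, Set.mem_singleton_iff] at h
          rcases h with rfl | rfl | rfl | rfl
          · exact Or.inl rfl
          · exact Or.inr (Or.inr (hmark _ (Or.inr (Or.inl rfl))))
          · exact Or.inr (Or.inr (hmark _ (Or.inr (Or.inr (Or.inr (Or.inr (Or.inr (Or.inl rfl))))))))
          · exact Or.inr (Or.inr (hmark _ (Or.inr (Or.inr (Or.inr (Or.inr (Or.inr (Or.inr (Or.inl rfl)))))))))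
        · rcases Set.mem_insert_iff.1 (hB q h) with h' | h'
          · exact Or.inl h'
          · rcases h' with h' | h'
            · exact Or.inr (Or.inl (Or.inr h'))
            · exact Or.inr (Or.inr (hmark _ (Or.inr (Or.inr (Or.inr (Or.inr (Or.inr (Or.inr (Or.inr h')))))))))
    · have hg1 := qsize_Gimpl (AP := AP) (m := z) (m' := z') (m'' := z'') (A := A)
      have hg2 := qsize_Gimpl (AP := AP) (m := w) (m' := w') (m'' := w'') (A := B)
      rw [qsize_qand, qsize_qand]
      simp only [List.length_cons, List.length_append, QCTL.qsize]
      omega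
    · intro W K x
      have HQ1W : ∀ (K' : Kripke AP W) (y : W), φ.sat K' y ↔ (prefixQ Q₁ A).sat K' y :=
        fun K' y => HQ1 W K' y
      have HQ2W : ∀ (K' : Kripke AP W) (y : W), χ.sat K' y ↔ (prefixQ Q₂ B).sat K' y :=
        fun K' y => HQ2 W K' y
      have hz'A : z' ∉ A.atoms := fun hc => hz'U (hAU z' hc)
      have hz''A : z'' ∉ A.atoms := fun hc => hz''U (hAU z'' hc)
      have hw'B : w' ∉ B.atoms := fun hc => hw'U (hBU w' hc)
      have hw''B : w'' ∉ B.atoms := fun hc => hw''U (hBU w'' hc)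
      have hzQ1 : z ∉ QAtoms Q₁ := Hz.2.2.2.2.1
      have hz'Q1 : z' ∉ QAtoms Q₁ := Hz'.2.2.2.2.1
      have hz''Q1 : z'' ∉ QAtoms Q₁ := Hz''.2.2.2.2.1
      have hwQ2 : w ∉ QAtoms Q₂ := Hw.2.2.2.2.2
      have hw'Q2 : w' ∉ QAtoms Q₂ := Hw'.2.2.2.2.2
      have hw''Q2 : w'' ∉ QAtoms Q₂ := Hw''.2.2.2.2.2
      set B1 : List (Bool × AP) := (false, z') :: (true, z'') :: Q₁ with hB1
      set B2 : List (Bool × AP) := (false, w') :: (true, w'') :: Q₂ with hB2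
      set GZ : QCTL AP := Gimpl z z' z'' A with hGZ
      set GW : QCTL AP := Gimpl w w' w'' B with hGW
      set op : QCTL AP := qAU (QCTL.atom z) (QCTL.atom w) with hop
      have hB2mem : ∀ q, q ∈ QAtoms B2 → q = w' ∨ q = w'' ∨ q ∈ QAtoms Q₂ := by
        intro q hc
        rcases mem_QAtoms_cons.1 hc with h | hc2
        · exact Or.inl h
        · rcases mem_QAtoms_cons.1 hc2 with h | h
          · exact Or.inr (Or.inl h)
          · exact Or.inr (Or.inr h)
      have hB1mem : ∀ q, q ∈ QAtoms B1 → q = z' ∨ q = z'' ∨ q ∈ QAtoms Q₁ := by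
        intro q hc
        rcases mem_QAtoms_cons.1 hc with h | hc2
        · exact Or.inl h
        · rcases mem_QAtoms_cons.1 hc2 with h | h
          · exact Or.inr (Or.inl h)
          · exact Or.inr (Or.inr h)
      have hC2 : ∀ q ∈ (qand op GZ).atoms, q ∉ QAtoms B2 := by
        intro q hq hc
        have hq' : (q = z ∨ q = w ∨ q = z' ∨ q = z'') ∨ q ∈ U := by
          rw [atoms_qand] at hq
          rcases hq with hq | hq
          · rcases hq with h | h
            · exact Or.inl (Or.inl (by simpa [QCTL.atoms] using h))
            · exact Or.inl (Or.inr (Or.inl (by simpa [QCTL.atoms] using h)))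
          · rcases atoms_Gimpl hq with h | h
            · simp only [Set.mem_insert_iff, Set.mem_singleton_iff] at h
              rcases h with rfl | rfl | rfl | rfl
              · exact Or.inr (hin _ (Or.inl rfl))
              · exact Or.inl (Or.inl rfl)
              · exact Or.inl (Or.inr (Or.inr (Or.inl rfl)))
              · exact Or.inl (Or.inr (Or.inr (Or.inr rfl)))
            · exact Or.inr (hAU q h)
        rcases hB2mem q hc with rfl | rfl | hc2
        · rcases hq' with (rfl | rfl | rfl | rfl) | hq'
          · exact hw'z rfl
          · exact hw'w rfl
          · exact hw'z' rfl
          · exact hw'z'' rfl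
          · exact hw'U hq'
        · rcases hq' with (rfl | rfl | rfl | rfl) | hq'
          · exact hw''z rfl
          · exact hw''w rfl
          · exact hw''z' rfl
          · exact hw''z'' rfl
          · exact hw''U hq'
        · rcases hq' with (rfl | rfl | rfl | rfl) | hq'
          · exact Hz.2.2.2.2.2 hc2
          · exact hwQ2 hc2
          · exact Hz'.2.2.2.2.2 hc2
          · exact Hz''.2.2.2.2.2 hc2
          · -- q ∈ U and q ∈ QAtoms Q₂; U-members in A-atoms scope:
            -- need finer: q ∈ atoms(op∧GZ) means q ∈ {default} ∪ atoms A (other cases covered)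
            -- atoms A ⊆ insert default (φ.atoms ∪ QAtoms Q₁), disjoint from Q₂
            rw [atoms_qand] at hq
            rcases hq with hq | hq
            · have : q = z ∨ q = w := by
                rcases hq with h | h
                · exact Or.inl (by simpa [QCTL.atoms] using h)
                · exact Or.inr (by simpa [QCTL.atoms] using h)
              rcases this with rfl | rfl
              · exact Hz.2.2.2.2.2 hc2
              · exact hwQ2 hc2
            · rcases atoms_Gimpl hq with h | h
              · simp only [Set.mem_insert_iff, Set.mem_singleton_iff] at h
                rcases h with rfl | rfl | rfl | rfl
                · exact (hQ2' _ hc2).1 rfl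
                · exact Hz.2.2.2.2.2 hc2
                · exact Hz'.2.2.2.2.2 hc2
                · exact Hz''.2.2.2.2.2 hc2
              · rcases Set.mem_insert_iff.1 (hA q h) with h' | h'
                · exact (hQ2' q hc2).1 h'
                · rcases h' with h' | h'
                  · exact (hQ2' q hc2).2.2.1 h'
                  · exact (hQ2' q hc2).2.2.2.2 h'
      have hC1 : ∀ q ∈ (qand op (prefixQ B2 GW)).atoms, q ∉ QAtoms B1 := by
        intro q hq hc
        have hq' : (q = z ∨ q = w ∨ q = w' ∨ q = w'' ∨ q ∈ QAtoms Q₂ ∨ q = default ∨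
            q ∈ χ.atoms) := by
          rw [atoms_qand] at hq
          rcases hq with hq | hq
          · rcases hq with h | h
            · exact Or.inl (by simpa [QCTL.atoms] using h)
            · exact Or.inr (Or.inl (by simpa [QCTL.atoms] using h))
          · rcases atoms_prefixQ hq with h | h
            · rcases hB2mem q h with h' | h' | h'
              · exact Or.inr (Or.inr (Or.inl h'))
              · exact Or.inr (Or.inr (Or.inr (Or.inl h')))
              · exact Or.inr (Or.inr (Or.inr (Or.inr (Or.inl h'))))
            · rcases atoms_Gimpl h with h' | h'
              · simp only [Set.mem_insert_iff, Set.mem_singleton_iff] at h'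
                rcases h' with rfl | rfl | rfl | rfl
                · exact Or.inr (Or.inr (Or.inr (Or.inr (Or.inr (Or.inl rfl)))))
                · exact Or.inr (Or.inl rfl)
                · exact Or.inr (Or.inr (Or.inl rfl))
                · exact Or.inr (Or.inr (Or.inr (Or.inl rfl)))
              · rcases Set.mem_insert_iff.1 (hB q h') with h'' | h''
                · exact Or.inr (Or.inr (Or.inr (Or.inr (Or.inr (Or.inl h'')))))
                · rcases h'' with h'' | h''
                  · exact Or.inr (Or.inr (Or.inr (Or.inr (Or.inr (Or.inr h'')))))
                  · exact Or.inr (Or.inr (Or.inr (Or.inr (Or.inl h''))))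
        rcases hB1mem q hc with rfl | rfl | hc1
        · rcases hq' with rfl | rfl | rfl | rfl | h | rfl | h
          · exact hz'z rfl
          · exact hz'w rfl
          · exact hw'z' rfl.symm
          · exact hw''z' rfl.symm
          · exact Hz'.2.2.2.2.2 h
          · exact Hz'.1 rfl
          · exact Hz'.2.2.2.1 h
        · rcases hq' with rfl | rfl | rfl | rfl | h | rfl | h
          · exact hz''z rfl
          · exact hz''w rfl
          · exact hw'z'' rfl.symm
          · exact hw''z'' rfl.symm
          · exact Hz''.2.2.2.2.2 h
          · exact Hz''.1 rfl
          · exact Hz''.2.2.2.1 h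
        · rcases hq' with rfl | rfl | rfl | rfl | h | rfl | h
          · exact hzQ1 hc1
          · exact Hw.2.2.2.2.1 hc1
          · exact Hw'.2.2.2.2.1 hc1
          · exact Hw''.2.2.2.2.1 hc1
          · exact (hQ2' q h).2.2.2.2 hc1
          · exact (hQ1' _ hc1).1 rfl
          · exact (hQ1' q hc1).2.2.2 h
      have hbcZ : ∀ K₂ : Kripke AP W, ((prefixQ B1 GZ).sat K₂ x ↔
          ∀ v, KReach K₂ x v → z ∈ K₂.label v → φ.sat K₂ v) := by
        intro K₂
        exact blockChar hz'z.symm hz''z.symm hz''z'.symm Hz.2.2.2.2.1 hz'Q1 hz''Q1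
          hz'A hz''A HQ1W K₂ x
      have hbcW : ∀ K₂ : Kripke AP W, ((prefixQ B2 GW).sat K₂ x ↔
          ∀ v, KReach K₂ x v → w ∈ K₂.label v → χ.sat K₂ v) := by
        intro K₂
        exact blockChar hw'w.symm hw''w.symm hw''w'.symm hwQ2 hw'Q2 hw''Q2
          hw'B hw''B HQ2W K₂ x
      have key : ∀ K₂ : Kripke AP W,
          ((prefixQ (B1 ++ B2) (qand (qand op GZ) GW)).sat K₂ x ↔
          (op.sat K₂ x ∧ (∀ v, KReach K₂ x v → z ∈ K₂.label v → φ.sat K₂ v) ∧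
            (∀ v, KReach K₂ x v → w ∈ K₂.label v → χ.sat K₂ v))) := by
        intro K₂
        rw [prefixQ_append]
        have step1 : ((prefixQ B1 (prefixQ B2 (qand (qand op GZ) GW))).sat K₂ x ↔
            (prefixQ B1 (qand (qand op (prefixQ B2 GW)) GZ)).sat K₂ x) := by
          refine prefix_congr ?_
          intro K' _
          rw [prefix_and hC2, sat_qand, sat_qand, sat_qand]
          tauto
        rw [step1, prefix_and hC1, sat_qand, hbcZ K₂, hbcW K₂]
        tauto
      rw [semAU Hz.2.2.1 Hz.2.2.2.1 Hw.2.2.1 Hw.2.2.2.1 (fun h => hwz h.symm) K x]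
      rw [prefixQ_cons_true, sat_qexi]
      refine exists_congr fun K₁ => and_congr_right fun _ => ?_
      rw [prefixQ_cons_true, sat_qexi]
      refine exists_congr fun K₂ => and_congr_right fun _ => ?_
      exact (key K₂).symm

end Stage1


/-! ### Stage 2: flattening a quantifier-free formula -/

section Stage2

set_option linter.unusedSectionVars false
set_option maxHeartbeats 1000000

lemma SK_finite (C : List (AP × QCTL AP)) : {q | ∃ θ, (q, θ) ∈ C}.Finite := by
  induction C with
  | nil =>
    convert Set.finite_empty
    ext q
    simp
  | cons p C ih =>
    have hsub : {q | ∃ θ, (q, θ) ∈ p :: C} ⊆ insert p.1 {q | ∃ θ, (q, θ) ∈ C} := by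
      rintro q ⟨θ, hθ⟩
      rcases List.mem_cons.1 hθ with h | h
      · exact Set.mem_insert_iff.2 (Or.inl (congrArg Prod.fst h))
      · exact Set.mem_insert_of_mem _ ⟨θ, h⟩
    exact (ih.insert p.1).subset hsub

lemma sat_qEU_congr {V : Type} {K : Kripke AP V} {v : V} {b₁ b₂ M₁ M₂ : QCTL AP}
    (h : ∀ u, KReach K v u → ((b₁.sat K u ↔ M₁.sat K u) ∧ (b₂.sat K u ↔ M₂.sat K u))) :
    ((qEU b₁ b₂).sat K v ↔ (qEU M₁ M₂).sat K v) := by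
  rw [sat_qEU, sat_qEU]
  refine exists_congr fun ρ => ?_
  refine and_congr_right fun h0 => and_congr_right fun hedge => exists_congr fun i =>
    and_congr ?_ ?_
  · exact (h _ (by rw [← h0]; exact path_kreach hedge i)).2
  · exact forall_congr' fun j => forall_congr' fun _ =>
      (h _ (by rw [← h0]; exact path_kreach hedge j)).1

lemma sat_qAU_congr {V : Type} {K : Kripke AP V} {v : V} {b₁ b₂ M₁ M₂ : QCTL AP}
    (h : ∀ u, KReach K v u → ((b₁.sat K u ↔ M₁.sat K u) ∧ (b₂.sat K u ↔ M₂.sat K u))) :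
    ((qAU b₁ b₂).sat K v ↔ (qAU M₁ M₂).sat K v) := by
  rw [sat_qAU, sat_qAU]
  refine forall_congr' fun ρ => ?_
  refine forall_congr' fun h0 => forall_congr' fun hedge => exists_congr fun i =>
    and_congr ?_ ?_
  · exact (h _ (by rw [← h0]; exact path_kreach hedge i)).2
  · exact forall_congr' fun j => forall_congr' fun _ =>
      (h _ (by rw [← h0]; exact path_kreach hedge j)).1

variable [Inhabited AP] [Infinite AP]

lemma stage2 (M : QCTL AP) :
    M.quantFree → ∀ (F : Set AP), F.Finite →
    ∃ (C : List (AP × QCTL AP)) (b : QCTL AP),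
      BoolAtoms b ∧
      (∀ p ∈ C, BasicCTL p.2) ∧
      (∀ p ∈ C, (p.1 ∉ F ∧ p.1 ∉ M.atoms ∧ p.1 ≠ default)) ∧
      (∀ q ∈ b.atoms, q ∈ M.atoms ∨ ∃ θ, (q, θ) ∈ C) ∧
      (∀ p ∈ C, ∀ q ∈ (p.2 : QCTL AP).atoms, q ∈ M.atoms ∨ ∃ θ, (q, θ) ∈ C) ∧
      ((C.map (fun p => (p.2 : QCTL AP).qsize)).sum + b.qsize ≤ 2 * M.qsize) ∧
      (C.length ≤ M.qsize) ∧
      (∀ (W : Type) (K : Kripke AP W) (x : W),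
        (∀ p ∈ C, ∀ v, KReach K x v → ((p.1 : AP) ∈ K.label v ↔ (p.2 : QCTL AP).sat K v)) →
        ∀ v, KReach K x v → (b.sat K v ↔ M.sat K v)) ∧
      (∀ (W : Type) (K : Kripke AP W), ∃ K' : Kripke AP W, K'.E = K.E ∧
        (∀ v q, (∀ θ, (q, θ) ∉ C) → (q ∈ K'.label v ↔ q ∈ K.label v)) ∧
        (∀ p ∈ C, ∀ v, ((p.1 : AP) ∈ K'.label v ↔ (p.2 : QCTL AP).sat K' v)) ∧
        (∀ v, b.sat K' v ↔ M.sat K' v)) := by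
  induction M with
  | atom p =>
    intro _ F hF
    refine ⟨[], QCTL.atom p, BoolAtoms.atom p, by simp, by simp, ?_, by simp, ?_, ?_, ?_, ?_⟩
    · intro q hq; exact Or.inl hq
    · simp [QCTL.qsize]
    · simp [QCTL.qsize]
    · intro W K x _ v _; exact Iff.rfl
    · intro W K; exact ⟨K, rfl, fun _ _ _ => Iff.rfl, by simp, fun _ => Iff.rfl⟩
  | qneg φ ih =>
    intro hqf F hF
    obtain ⟨C, b, hb, hbasic, hfresh, hbat, hθat, hsz, hlen, HA, HB⟩ := ih hqf F hF
    refine ⟨C, QCTL.qneg b, BoolAtoms.qneg hb, hbasic, hfresh, hbat, hθat, ?_, ?_, ?_, ?_⟩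
    · simp only [QCTL.qsize] at *; omega
    · simp only [QCTL.qsize] at *; omega
    · intro W K x hcon v hv
      exact not_congr (HA W K x hcon v hv)
    · intro W K
      obtain ⟨K', h1, h2, h3, h4⟩ := HB W K
      exact ⟨K', h1, h2, h3, fun v => not_congr (h4 v)⟩
  | qor φ ψ ihφ ihψ =>
    intro hqf F hF
    obtain ⟨C₁, b₁, hb1, hbasic1, hfresh1, hbat1, hθat1, hsz1, hlen1, HA1, HB1⟩ :=
      ihφ hqf.1 (F ∪ ψ.atoms) (hF.union (atoms_finite ψ))
    obtain ⟨C₂, b₂, hb2, hbasic2, hfresh2, hbat2, hθat2, hsz2, hlen2, HA2, HB2⟩ :=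
      ihψ hqf.2 (F ∪ φ.atoms ∪ {q | ∃ θ, (q, θ) ∈ C₁})
        ((hF.union (atoms_finite φ)).union (SK_finite C₁))
    have hfresh1' : ∀ p ∈ C₁, (p : AP × QCTL AP).1 ∉ F ∧ p.1 ∉ φ.atoms ∧ p.1 ∉ ψ.atoms ∧
        p.1 ≠ default := by
      intro p hp
      have := hfresh1 p hp
      simp only [Set.mem_union, not_or] at this
      tauto
    have hfresh2' : ∀ p ∈ C₂, (p : AP × QCTL AP).1 ∉ F ∧ p.1 ∉ φ.atoms ∧ p.1 ∉ ψ.atoms ∧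
        (∀ θ, (p.1, θ) ∉ C₁) ∧ p.1 ≠ default := by
      intro p hp
      have := hfresh2 p hp
      simp only [Set.mem_union, not_or, Set.mem_setOf_eq, not_exists] at this
      tauto
    have hmem : ∀ (q : AP) (θ : QCTL AP), (q, θ) ∈ C₁ ++ C₂ ↔ ((q, θ) ∈ C₁ ∨ (q, θ) ∈ C₂) :=
      fun q θ => List.mem_append
    refine ⟨C₁ ++ C₂, QCTL.qor b₁ b₂, BoolAtoms.qor hb1 hb2, ?_, ?_, ?_, ?_, ?_, ?_, ?_, ?_⟩
    · intro p hp
      rcases List.mem_append.1 hp with h | h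
      · exact hbasic1 p h
      · exact hbasic2 p h
    · intro p hp
      simp only [show (QCTL.qor φ ψ).atoms = φ.atoms ∪ ψ.atoms from rfl, Set.mem_union, not_or]
      rcases List.mem_append.1 hp with h | h
      · have h1 := hfresh1' p h
        exact ⟨h1.1, ⟨h1.2.1, h1.2.2.1⟩, h1.2.2.2⟩
      · have h2 := hfresh2' p h
        exact ⟨h2.1, ⟨h2.2.1, h2.2.2.1⟩, h2.2.2.2.2⟩
    · intro q hq
      simp only [show (QCTL.qor φ ψ).atoms = φ.atoms ∪ ψ.atoms from rfl, Set.mem_union]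
      rcases hq with hq | hq
      · rcases hbat1 q hq with h | ⟨θ, h⟩
        · exact Or.inl (Or.inl h)
        · exact Or.inr ⟨θ, List.mem_append.2 (Or.inl h)⟩
      · rcases hbat2 q hq with h | ⟨θ, h⟩
        · exact Or.inl (Or.inr h)
        · exact Or.inr ⟨θ, List.mem_append.2 (Or.inr h)⟩
    · intro p hp q hq
      simp only [show (QCTL.qor φ ψ).atoms = φ.atoms ∪ ψ.atoms from rfl, Set.mem_union]
      rcases List.mem_append.1 hp with h | h
      · rcases hθat1 p h q hq with h' | ⟨θ, h'⟩
        · exact Or.inl (Or.inl h')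
        · exact Or.inr ⟨θ, List.mem_append.2 (Or.inl h')⟩
      · rcases hθat2 p h q hq with h' | ⟨θ, h'⟩
        · exact Or.inl (Or.inr h')
        · exact Or.inr ⟨θ, List.mem_append.2 (Or.inr h')⟩
    · rw [List.map_append, List.sum_append]
      simp only [QCTL.qsize] at *
      omega
    · rw [List.length_append]
      simp only [QCTL.qsize] at *
      omega
    · intro W K x hcon v hv
      have h1 := HA1 W K x (fun p hp => hcon p (List.mem_append.2 (Or.inl hp))) v hv
      have h2 := HA2 W K x (fun p hp => hcon p (List.mem_append.2 (Or.inr hp))) v hv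
      exact or_congr h1 h2
    · intro W K
      obtain ⟨K₁, hE1, hag1, hcon1, hb1iff⟩ := HB1 W K
      obtain ⟨K₂, hE2, hag2, hcon2, hb2iff⟩ := HB2 W K₁
      have trans12 : ∀ (ξ : QCTL AP),
          (∀ q ∈ ξ.atoms, q ∈ φ.atoms ∨ ∃ θ, (q, θ) ∈ C₁) →
          ∀ v, (ξ.sat K₁ v ↔ ξ.sat K₂ v) := by
        intro ξ hξ v
        refine sat_invar ξ K₁ K₂ hE2 ?_ v
        intro u q hq
        refine (hag2 u q ?_).symm
        intro θ hθ
        have h2 := hfresh2' (q, θ) hθ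
        rcases hξ q hq with h | ⟨θ', h⟩
        · exact h2.2.1 h
        · exact h2.2.2.2.1 θ' h
      refine ⟨K₂, hE2.trans hE1, ?_, ?_, ?_⟩
      · intro v q hq
        have hq1 : ∀ θ, (q, θ) ∉ C₁ := fun θ hθ => hq θ (List.mem_append.2 (Or.inl hθ))
        have hq2 : ∀ θ, (q, θ) ∉ C₂ := fun θ hθ => hq θ (List.mem_append.2 (Or.inr hθ))
        exact (hag2 v q hq2).trans (hag1 v q hq1)
      · intro p hp v
        rcases List.mem_append.1 hp with h | h
        · have hkey : (p.1 : AP) ∈ K₂.label v ↔ p.1 ∈ K₁.label v := by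
            refine hag2 v p.1 ?_
            intro θ hθ
            exact (hfresh2' (p.1, θ) hθ).2.2.2.1 p.2 (by
              have : p = (p.1, p.2) := rfl
              rw [← this]; exact h)
          rw [hkey, hcon1 p h v]
          exact trans12 p.2 (hθat1 p h) v
        · exact hcon2 p h v
      · intro v
        have hb1' : b₁.sat K₂ v ↔ φ.sat K₂ v := by
          rw [← trans12 b₁ hbat1 v, ← trans12 φ (fun q hq => Or.inl hq) v]
          exact hb1iff v
        exact or_congr hb1' (hb2iff v)
  | qEX φ ih =>
    intro hqf F hF
    obtain ⟨C₁, b₁, hb1, hbasic1, hfresh1, hbat1, hθat1, hsz1, hlen1, HA1, HB1⟩ := ih hqf F hF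
    obtain ⟨κ, hκ⟩ := exists_fresh1
      ((((hF.union (atoms_finite φ)).union (SK_finite C₁)).insert default))
    have hκ' : κ ≠ default ∧ κ ∉ F ∧ κ ∉ φ.atoms ∧ (∀ θ, (κ, θ) ∉ C₁) := by
      simp only [Set.mem_insert_iff, Set.mem_union, not_or, Set.mem_setOf_eq,
        not_exists] at hκ
      tauto
    have hκA : κ ∉ (qEX b₁ : QCTL AP).atoms := by
      intro hc
      rcases hbat1 κ hc with h | ⟨θ, h⟩
      · exact hκ'.2.2.1 h
      · exact hκ'.2.2.2 θ h
    refine ⟨C₁ ++ [(κ, qEX b₁)], QCTL.atom κ, BoolAtoms.atom κ, ?_, ?_, ?_, ?_, ?_, ?_, ?_, ?_⟩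
    · intro p hp
      rcases List.mem_append.1 hp with h | h
      · exact hbasic1 p h
      · have : p = (κ, qEX b₁) := by simpa using h
        rw [this]
        exact BasicCTL.qEX hb1
    · intro p hp
      rcases List.mem_append.1 hp with h | h
      · have := hfresh1 p h
        exact ⟨this.1, this.2.1, this.2.2⟩
      · have hpe : p = (κ, qEX b₁) := by simpa using h
        rw [hpe]
        exact ⟨hκ'.2.1, hκ'.2.2.1, hκ'.1⟩
    · intro q hq
      have hqκ : q = κ := by simpa [QCTL.atoms] using hq
      subst hqκ
      exact Or.inr ⟨qEX b₁, List.mem_append.2 (Or.inr (by simp))⟩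
    · intro p hp q hq
      rcases List.mem_append.1 hp with h | h
      · rcases hθat1 p h q hq with h' | ⟨θ, h'⟩
        · exact Or.inl h'
        · exact Or.inr ⟨θ, List.mem_append.2 (Or.inl h')⟩
      · have hpe : p = (κ, qEX b₁) := by simpa using h
        rw [hpe] at hq
        have : q ∈ b₁.atoms := by simpa [QCTL.atoms] using hq
        rcases hbat1 q this with h' | ⟨θ, h'⟩
        · exact Or.inl h'
        · exact Or.inr ⟨θ, List.mem_append.2 (Or.inl h')⟩
    · rw [List.map_append, List.sum_append]
      simp only [List.map_cons, List.map_nil, List.sum_cons, List.sum_nil, QCTL.qsize] at *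
      omega
    · rw [List.length_append]
      simp only [List.length_cons, List.length_nil, QCTL.qsize] at *
      omega
    · intro W K x hcon v hv
      have hκcon := hcon (κ, qEX b₁) (List.mem_append.2 (Or.inr (by simp))) v hv
      rw [show (QCTL.atom κ).sat K v ↔ κ ∈ K.label v from Iff.rfl, hκcon]
      rw [sat_qEX, sat_qEX]
      refine exists_congr fun y => and_congr_right fun hy => ?_
      exact HA1 W K x (fun p hp => hcon p (List.mem_append.2 (Or.inl hp))) y
        (Relation.ReflTransGen.tail hv hy)
    · intro W K
      obtain ⟨K₁, hE1, hag1, hcon1, hb1iff⟩ := HB1 W K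
      set K' := K₁.override κ {v | (qEX b₁).sat K₁ v} with hK'
      have hE' : K'.E = K₁.E := rfl
      have transκ : ∀ (ξ : QCTL AP), κ ∉ ξ.atoms → ∀ v, (ξ.sat K₁ v ↔ ξ.sat K' v) := by
        intro ξ hξ v
        refine sat_invar ξ K₁ K' rfl ?_ v
        intro u q hq
        have hqκ : q ≠ κ := fun hc => hξ (hc ▸ hq)
        rw [mem_override, if_neg hqκ]
      have hκφ : κ ∉ φ.atoms := hκ'.2.2.1
      have hθprop : ∀ p ∈ C₁, κ ∉ (p.2 : QCTL AP).atoms := by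
        intro p hp hc
        rcases hθat1 p hp κ hc with h | ⟨θ, h⟩
        · exact hκ'.2.2.1 h
        · exact hκ'.2.2.2 θ h
      refine ⟨K', hE1, ?_, ?_, ?_⟩
      · intro v q hq
        have hq1 : ∀ θ, (q, θ) ∉ C₁ := fun θ hθ => hq θ (List.mem_append.2 (Or.inl hθ))
        have hqκ : q ≠ κ := by
          intro hc
          exact hq (qEX b₁) (List.mem_append.2 (Or.inr (by simp [hc])))
        rw [show q ∈ K'.label v ↔ _ from mem_override K₁ κ _ v q, if_neg hqκ]
        exact hag1 v q hq1
      · intro p hp v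
        rcases List.mem_append.1 hp with h | h
        · have hpκ : (p.1 : AP) ≠ κ := by
            intro hc
            exact hκ'.2.2.2 p.2 (by rw [← hc]; exact (by
              have : p = (p.1, p.2) := rfl
              rw [← this]; exact h))
          rw [show (p.1 : AP) ∈ K'.label v ↔ _ from mem_override K₁ κ _ v p.1, if_neg hpκ]
          rw [hcon1 p h v]
          exact transκ p.2 (hθprop p h) v
        · have hpe : p = (κ, qEX b₁) := by simpa using h
          rw [hpe]
          rw [show (κ : AP) ∈ K'.label v ↔ _ from mem_override K₁ κ _ v κ, if_pos rfl]
          simp only [Set.mem_setOf_eq]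
          exact transκ (qEX b₁) hκA v
      · intro v
        rw [show (QCTL.atom κ).sat K' v ↔ κ ∈ K'.label v from Iff.rfl]
        rw [show (κ : AP) ∈ K'.label v ↔ _ from mem_override K₁ κ _ v κ, if_pos rfl]
        simp only [Set.mem_setOf_eq]
        have h1 : (qEX b₁).sat K₁ v ↔ (qEX φ).sat K₁ v := by
          rw [sat_qEX, sat_qEX]
          exact exists_congr fun y => and_congr_right fun _ => hb1iff y
        rw [h1]
        exact transκ (qEX φ) (by
          intro hc
          exact hκφ (by simpa [QCTL.atoms] using hc)) v
  | qEU φ ψ ihφ ihψ =>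
    intro hqf F hF
    obtain ⟨C₁, b₁, hb1, hbasic1, hfresh1, hbat1, hθat1, hsz1, hlen1, HA1, HB1⟩ :=
      ihφ hqf.1 (F ∪ ψ.atoms) (hF.union (atoms_finite ψ))
    obtain ⟨C₂, b₂, hb2, hbasic2, hfresh2, hbat2, hθat2, hsz2, hlen2, HA2, HB2⟩ :=
      ihψ hqf.2 (F ∪ φ.atoms ∪ {q | ∃ θ, (q, θ) ∈ C₁})
        ((hF.union (atoms_finite φ)).union (SK_finite C₁))
    have hfresh1' : ∀ p ∈ C₁, (p : AP × QCTL AP).1 ∉ F ∧ p.1 ∉ φ.atoms ∧ p.1 ∉ ψ.atoms ∧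
        p.1 ≠ default := by
      intro p hp
      have := hfresh1 p hp
      simp only [Set.mem_union, not_or] at this
      tauto
    have hfresh2' : ∀ p ∈ C₂, (p : AP × QCTL AP).1 ∉ F ∧ p.1 ∉ φ.atoms ∧ p.1 ∉ ψ.atoms ∧
        (∀ θ, (p.1, θ) ∉ C₁) ∧ p.1 ≠ default := by
      intro p hp
      have := hfresh2 p hp
      simp only [Set.mem_union, not_or, Set.mem_setOf_eq, not_exists] at this
      tauto
    obtain ⟨κ, hκ⟩ := exists_fresh1
      (((((((hF.union (atoms_finite φ)).union (atoms_finite ψ)).union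
        (SK_finite C₁)).union (SK_finite C₂)).insert default)))
    have hκ' : κ ≠ default ∧ κ ∉ F ∧ κ ∉ φ.atoms ∧ κ ∉ ψ.atoms ∧
        (∀ θ, (κ, θ) ∉ C₁) ∧ (∀ θ, (κ, θ) ∉ C₂) := by
      simp only [Set.mem_insert_iff, Set.mem_union, not_or, Set.mem_setOf_eq,
        not_exists] at hκ
      tauto
    set θnew : QCTL AP := qEU b₁ b₂ with hθnew
    have hκθ : κ ∉ θnew.atoms := by
      intro hc
      have : κ ∈ b₁.atoms ∨ κ ∈ b₂.atoms := by
        simpa [hθnew, QCTL.atoms] using hc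
      rcases this with h | h
      · rcases hbat1 κ h with h' | ⟨θ, h'⟩
        · exact hκ'.2.2.1 h'
        · exact hκ'.2.2.2.2.1 θ h'
      · rcases hbat2 κ h with h' | ⟨θ, h'⟩
        · exact hκ'.2.2.2.1 h'
        · exact hκ'.2.2.2.2.2 θ h'
    have hmemlast : (κ, θnew) ∈ C₁ ++ C₂ ++ [(κ, θnew)] :=
      List.mem_append.2 (Or.inr (by simp))
    refine ⟨C₁ ++ C₂ ++ [(κ, θnew)], QCTL.atom κ, BoolAtoms.atom κ, ?_, ?_, ?_, ?_, ?_, ?_,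
      ?_, ?_⟩
    · intro p hp
      rcases List.mem_append.1 hp with h | h
      · rcases List.mem_append.1 h with h' | h'
        · exact hbasic1 p h'
        · exact hbasic2 p h'
      · have hpe : p = (κ, θnew) := by simpa using h
        rw [hpe]
        exact BasicCTL.qEU hb1 hb2
    · intro p hp
      simp only [show (QCTL.qEU φ ψ).atoms = φ.atoms ∪ ψ.atoms from rfl, Set.mem_union,
        not_or]
      rcases List.mem_append.1 hp with h | h
      · rcases List.mem_append.1 h with h' | h'
        · have h1 := hfresh1' p h'
          exact ⟨h1.1, ⟨h1.2.1, h1.2.2.1⟩, h1.2.2.2⟩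
        · have h2 := hfresh2' p h'
          exact ⟨h2.1, ⟨h2.2.1, h2.2.2.1⟩, h2.2.2.2.2⟩
      · have hpe : p = (κ, θnew) := by simpa using h
        rw [hpe]
        exact ⟨hκ'.2.1, ⟨hκ'.2.2.1, hκ'.2.2.2.1⟩, hκ'.1⟩
    · intro q hq
      have hqκ : q = κ := by simpa [QCTL.atoms] using hq
      subst hqκ
      exact Or.inr ⟨θnew, hmemlast⟩
    · intro p hp q hq
      simp only [show (QCTL.qEU φ ψ).atoms = φ.atoms ∪ ψ.atoms from rfl, Set.mem_union]
      rcases List.mem_append.1 hp with h | h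
      · rcases List.mem_append.1 h with h' | h'
        · rcases hθat1 p h' q hq with h'' | ⟨θ, h''⟩
          · exact Or.inl (Or.inl h'')
          · exact Or.inr ⟨θ, List.mem_append.2 (Or.inl (List.mem_append.2 (Or.inl h'')))⟩
        · rcases hθat2 p h' q hq with h'' | ⟨θ, h''⟩
          · exact Or.inl (Or.inr h'')
          · exact Or.inr ⟨θ, List.mem_append.2 (Or.inl (List.mem_append.2 (Or.inr h'')))⟩
      · have hpe : p = (κ, θnew) := by simpa using h
        rw [hpe] at hq
        have : q ∈ b₁.atoms ∨ q ∈ b₂.atoms := by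
          simpa [hθnew, QCTL.atoms] using hq
        rcases this with h' | h'
        · rcases hbat1 q h' with h'' | ⟨θ, h''⟩
          · exact Or.inl (Or.inl h'')
          · exact Or.inr ⟨θ, List.mem_append.2 (Or.inl (List.mem_append.2 (Or.inl h'')))⟩
        · rcases hbat2 q h' with h'' | ⟨θ, h''⟩
          · exact Or.inl (Or.inr h'')
          · exact Or.inr ⟨θ, List.mem_append.2 (Or.inl (List.mem_append.2 (Or.inr h'')))⟩
    · rw [List.map_append, List.sum_append, List.map_append, List.sum_append]
      simp only [List.map_cons, List.map_nil, List.sum_cons, List.sum_nil, hθnew,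
        QCTL.qsize] at *
      omega
    · rw [List.length_append, List.length_append]
      simp only [List.length_cons, List.length_nil, QCTL.qsize] at *
      omega
    · intro W K x hcon v hv
      have hcon1 : ∀ p ∈ C₁, ∀ u, KReach K x u →
          ((p : AP × QCTL AP).1 ∈ K.label u ↔ (p.2 : QCTL AP).sat K u) :=
        fun p hp => hcon p (List.mem_append.2 (Or.inl (List.mem_append.2 (Or.inl hp))))
      have hcon2 : ∀ p ∈ C₂, ∀ u, KReach K x u →
          ((p : AP × QCTL AP).1 ∈ K.label u ↔ (p.2 : QCTL AP).sat K u) :=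
        fun p hp => hcon p (List.mem_append.2 (Or.inl (List.mem_append.2 (Or.inr hp))))
      have hconκ := hcon (κ, θnew) hmemlast v hv
      rw [show (QCTL.atom κ).sat K v ↔ κ ∈ K.label v from Iff.rfl, hconκ]
      refine (sat_qEU_congr ?_)
      intro u hu
      have hru : KReach K x u := Relation.ReflTransGen.trans hv hu
      exact ⟨HA1 W K x hcon1 u hru, HA2 W K x hcon2 u hru⟩
    · intro W K
      obtain ⟨K₁, hE1, hag1, hcon1, hb1iff⟩ := HB1 W K
      obtain ⟨K₂, hE2, hag2, hcon2, hb2iff⟩ := HB2 W K₁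
      set K' := K₂.override κ {v | θnew.sat K₂ v} with hK'
      have trans12 : ∀ (ξ : QCTL AP),
          (∀ q ∈ ξ.atoms, q ∈ φ.atoms ∨ ∃ θ, (q, θ) ∈ C₁) →
          ∀ v, (ξ.sat K₁ v ↔ ξ.sat K₂ v) := by
        intro ξ hξ v
        refine sat_invar ξ K₁ K₂ hE2 ?_ v
        intro u q hq
        refine (hag2 u q ?_).symm
        intro θ hθ
        have h2 := hfresh2' (q, θ) hθ
        rcases hξ q hq with h | ⟨θ', h⟩
        · exact h2.2.1 h
        · exact h2.2.2.2.1 θ' h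
      have transκ : ∀ (ξ : QCTL AP), κ ∉ ξ.atoms → ∀ v, (ξ.sat K₂ v ↔ ξ.sat K' v) := by
        intro ξ hξ v
        refine sat_invar ξ K₂ K' rfl ?_ v
        intro u q hq
        have hqκ : q ≠ κ := fun hc => hξ (hc ▸ hq)
        rw [mem_override, if_neg hqκ]
      refine ⟨K', (hE2.trans hE1 : K₂.E = K.E), ?_, ?_, ?_⟩
      · intro v q hq
        have hq1 : ∀ θ, (q, θ) ∉ C₁ :=
          fun θ hθ => hq θ (List.mem_append.2 (Or.inl (List.mem_append.2 (Or.inl hθ))))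
        have hq2 : ∀ θ, (q, θ) ∉ C₂ :=
          fun θ hθ => hq θ (List.mem_append.2 (Or.inl (List.mem_append.2 (Or.inr hθ))))
        have hqκ : q ≠ κ := fun hc => hq θnew (hc ▸ hmemlast)
        rw [show q ∈ K'.label v ↔ _ from mem_override K₂ κ _ v q, if_neg hqκ]
        exact (hag2 v q hq2).trans (hag1 v q hq1)
      · intro p hp v
        rcases List.mem_append.1 hp with h | h
        · rcases List.mem_append.1 h with h' | h'
          · have hpκ : (p.1 : AP) ≠ κ := by
              intro hc
              refine hκ'.2.2.2.2.1 p.2 ?_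
              rw [← hc]
              exact (show (p.1, p.2) ∈ C₁ from h')
            have hkey2 : (p.1 : AP) ∈ K₂.label v ↔ p.1 ∈ K₁.label v := by
              refine hag2 v p.1 ?_
              intro θ hθ
              exact (hfresh2' (p.1, θ) hθ).2.2.2.1 p.2 (show (p.1, p.2) ∈ C₁ from h')
            rw [show (p.1 : AP) ∈ K'.label v ↔ _ from mem_override K₂ κ _ v p.1,
              if_neg hpκ, hkey2, hcon1 p h' v]
            rw [trans12 p.2 (hθat1 p h') v]
            refine transκ p.2 ?_ v
            intro hc
            rcases hθat1 p h' κ hc with h'' | ⟨θ, h''⟩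
            · exact hκ'.2.2.1 h''
            · exact hκ'.2.2.2.2.1 θ h''
          · have hpκ : (p.1 : AP) ≠ κ := by
              intro hc
              refine hκ'.2.2.2.2.2 p.2 ?_
              rw [← hc]
              exact (show (p.1, p.2) ∈ C₂ from h')
            rw [show (p.1 : AP) ∈ K'.label v ↔ _ from mem_override K₂ κ _ v p.1,
              if_neg hpκ, hcon2 p h' v]
            refine transκ p.2 ?_ v
            intro hc
            rcases hθat2 p h' κ hc with h'' | ⟨θ, h''⟩
            · exact hκ'.2.2.2.1 h''
            · exact hκ'.2.2.2.2.2 θ h''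
        · have hpe : p = (κ, θnew) := by simpa using h
          rw [hpe]
          rw [show (κ : AP) ∈ K'.label v ↔ _ from mem_override K₂ κ _ v κ, if_pos rfl]
          simp only [Set.mem_setOf_eq]
          exact transκ θnew hκθ v
      · intro v
        rw [show (QCTL.atom κ).sat K' v ↔ κ ∈ K'.label v from Iff.rfl]
        rw [show (κ : AP) ∈ K'.label v ↔ _ from mem_override K₂ κ _ v κ, if_pos rfl]
        simp only [Set.mem_setOf_eq]
        have hb1K₂ : ∀ u, b₁.sat K₂ u ↔ φ.sat K₂ u := by
          intro u
          rw [← trans12 b₁ hbat1 u, ← trans12 φ (fun q hq => Or.inl hq) u]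
          exact hb1iff u
        have h1 : θnew.sat K₂ v ↔ (QCTL.qEU φ ψ).sat K₂ v := by
          refine sat_qEU_congr ?_
          intro u _
          exact ⟨hb1K₂ u, hb2iff u⟩
        rw [h1]
        refine transκ (QCTL.qEU φ ψ) ?_ v
        intro hc
        have : κ ∈ φ.atoms ∨ κ ∈ ψ.atoms := by
          simpa [QCTL.atoms] using hc
        rcases this with h | h
        · exact hκ'.2.2.1 h
        · exact hκ'.2.2.2.1 h
  | qAU φ ψ ihφ ihψ =>
    intro hqf F hF
    obtain ⟨C₁, b₁, hb1, hbasic1, hfresh1, hbat1, hθat1, hsz1, hlen1, HA1, HB1⟩ :=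
      ihφ hqf.1 (F ∪ ψ.atoms) (hF.union (atoms_finite ψ))
    obtain ⟨C₂, b₂, hb2, hbasic2, hfresh2, hbat2, hθat2, hsz2, hlen2, HA2, HB2⟩ :=
      ihψ hqf.2 (F ∪ φ.atoms ∪ {q | ∃ θ, (q, θ) ∈ C₁})
        ((hF.union (atoms_finite φ)).union (SK_finite C₁))
    have hfresh1' : ∀ p ∈ C₁, (p : AP × QCTL AP).1 ∉ F ∧ p.1 ∉ φ.atoms ∧ p.1 ∉ ψ.atoms ∧
        p.1 ≠ default := by
      intro p hp
      have := hfresh1 p hp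
      simp only [Set.mem_union, not_or] at this
      tauto
    have hfresh2' : ∀ p ∈ C₂, (p : AP × QCTL AP).1 ∉ F ∧ p.1 ∉ φ.atoms ∧ p.1 ∉ ψ.atoms ∧
        (∀ θ, (p.1, θ) ∉ C₁) ∧ p.1 ≠ default := by
      intro p hp
      have := hfresh2 p hp
      simp only [Set.mem_union, not_or, Set.mem_setOf_eq, not_exists] at this
      tauto
    obtain ⟨κ, hκ⟩ := exists_fresh1
      (((((((hF.union (atoms_finite φ)).union (atoms_finite ψ)).union
        (SK_finite C₁)).union (SK_finite C₂)).insert default)))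
    have hκ' : κ ≠ default ∧ κ ∉ F ∧ κ ∉ φ.atoms ∧ κ ∉ ψ.atoms ∧
        (∀ θ, (κ, θ) ∉ C₁) ∧ (∀ θ, (κ, θ) ∉ C₂) := by
      simp only [Set.mem_insert_iff, Set.mem_union, not_or, Set.mem_setOf_eq,
        not_exists] at hκ
      tauto
    set θnew : QCTL AP := qAU b₁ b₂ with hθnew
    have hκθ : κ ∉ θnew.atoms := by
      intro hc
      have : κ ∈ b₁.atoms ∨ κ ∈ b₂.atoms := by
        simpa [hθnew, QCTL.atoms] using hc
      rcases this with h | h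
      · rcases hbat1 κ h with h' | ⟨θ, h'⟩
        · exact hκ'.2.2.1 h'
        · exact hκ'.2.2.2.2.1 θ h'
      · rcases hbat2 κ h with h' | ⟨θ, h'⟩
        · exact hκ'.2.2.2.1 h'
        · exact hκ'.2.2.2.2.2 θ h'
    have hmemlast : (κ, θnew) ∈ C₁ ++ C₂ ++ [(κ, θnew)] :=
      List.mem_append.2 (Or.inr (by simp))
    refine ⟨C₁ ++ C₂ ++ [(κ, θnew)], QCTL.atom κ, BoolAtoms.atom κ, ?_, ?_, ?_, ?_, ?_, ?_,
      ?_, ?_⟩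
    · intro p hp
      rcases List.mem_append.1 hp with h | h
      · rcases List.mem_append.1 h with h' | h'
        · exact hbasic1 p h'
        · exact hbasic2 p h'
      · have hpe : p = (κ, θnew) := by simpa using h
        rw [hpe]
        exact BasicCTL.qAU hb1 hb2
    · intro p hp
      simp only [show (QCTL.qAU φ ψ).atoms = φ.atoms ∪ ψ.atoms from rfl, Set.mem_union,
        not_or]
      rcases List.mem_append.1 hp with h | h
      · rcases List.mem_append.1 h with h' | h'
        · have h1 := hfresh1' p h'
          exact ⟨h1.1, ⟨h1.2.1, h1.2.2.1⟩, h1.2.2.2⟩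
        · have h2 := hfresh2' p h'
          exact ⟨h2.1, ⟨h2.2.1, h2.2.2.1⟩, h2.2.2.2.2⟩
      · have hpe : p = (κ, θnew) := by simpa using h
        rw [hpe]
        exact ⟨hκ'.2.1, ⟨hκ'.2.2.1, hκ'.2.2.2.1⟩, hκ'.1⟩
    · intro q hq
      have hqκ : q = κ := by simpa [QCTL.atoms] using hq
      subst hqκ
      exact Or.inr ⟨θnew, hmemlast⟩
    · intro p hp q hq
      simp only [show (QCTL.qAU φ ψ).atoms = φ.atoms ∪ ψ.atoms from rfl, Set.mem_union]
      rcases List.mem_append.1 hp with h | h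
      · rcases List.mem_append.1 h with h' | h'
        · rcases hθat1 p h' q hq with h'' | ⟨θ, h''⟩
          · exact Or.inl (Or.inl h'')
          · exact Or.inr ⟨θ, List.mem_append.2 (Or.inl (List.mem_append.2 (Or.inl h'')))⟩
        · rcases hθat2 p h' q hq with h'' | ⟨θ, h''⟩
          · exact Or.inl (Or.inr h'')
          · exact Or.inr ⟨θ, List.mem_append.2 (Or.inl (List.mem_append.2 (Or.inr h'')))⟩
      · have hpe : p = (κ, θnew) := by simpa using h
        rw [hpe] at hq
        have : q ∈ b₁.atoms ∨ q ∈ b₂.atoms := by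
          simpa [hθnew, QCTL.atoms] using hq
        rcases this with h' | h'
        · rcases hbat1 q h' with h'' | ⟨θ, h''⟩
          · exact Or.inl (Or.inl h'')
          · exact Or.inr ⟨θ, List.mem_append.2 (Or.inl (List.mem_append.2 (Or.inl h'')))⟩
        · rcases hbat2 q h' with h'' | ⟨θ, h''⟩
          · exact Or.inl (Or.inr h'')
          · exact Or.inr ⟨θ, List.mem_append.2 (Or.inl (List.mem_append.2 (Or.inr h'')))⟩
    · rw [List.map_append, List.sum_append, List.map_append, List.sum_append]
      simp only [List.map_cons, List.map_nil, List.sum_cons, List.sum_nil, hθnew,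
        QCTL.qsize] at *
      omega
    · rw [List.length_append, List.length_append]
      simp only [List.length_cons, List.length_nil, QCTL.qsize] at *
      omega
    · intro W K x hcon v hv
      have hcon1 : ∀ p ∈ C₁, ∀ u, KReach K x u →
          ((p : AP × QCTL AP).1 ∈ K.label u ↔ (p.2 : QCTL AP).sat K u) :=
        fun p hp => hcon p (List.mem_append.2 (Or.inl (List.mem_append.2 (Or.inl hp))))
      have hcon2 : ∀ p ∈ C₂, ∀ u, KReach K x u →
          ((p : AP × QCTL AP).1 ∈ K.label u ↔ (p.2 : QCTL AP).sat K u) :=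
        fun p hp => hcon p (List.mem_append.2 (Or.inl (List.mem_append.2 (Or.inr hp))))
      have hconκ := hcon (κ, θnew) hmemlast v hv
      rw [show (QCTL.atom κ).sat K v ↔ κ ∈ K.label v from Iff.rfl, hconκ]
      refine (sat_qAU_congr ?_)
      intro u hu
      have hru : KReach K x u := Relation.ReflTransGen.trans hv hu
      exact ⟨HA1 W K x hcon1 u hru, HA2 W K x hcon2 u hru⟩
    · intro W K
      obtain ⟨K₁, hE1, hag1, hcon1, hb1iff⟩ := HB1 W K
      obtain ⟨K₂, hE2, hag2, hcon2, hb2iff⟩ := HB2 W K₁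
      set K' := K₂.override κ {v | θnew.sat K₂ v} with hK'
      have trans12 : ∀ (ξ : QCTL AP),
          (∀ q ∈ ξ.atoms, q ∈ φ.atoms ∨ ∃ θ, (q, θ) ∈ C₁) →
          ∀ v, (ξ.sat K₁ v ↔ ξ.sat K₂ v) := by
        intro ξ hξ v
        refine sat_invar ξ K₁ K₂ hE2 ?_ v
        intro u q hq
        refine (hag2 u q ?_).symm
        intro θ hθ
        have h2 := hfresh2' (q, θ) hθ
        rcases hξ q hq with h | ⟨θ', h⟩
        · exact h2.2.1 h
        · exact h2.2.2.2.1 θ' h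
      have transκ : ∀ (ξ : QCTL AP), κ ∉ ξ.atoms → ∀ v, (ξ.sat K₂ v ↔ ξ.sat K' v) := by
        intro ξ hξ v
        refine sat_invar ξ K₂ K' rfl ?_ v
        intro u q hq
        have hqκ : q ≠ κ := fun hc => hξ (hc ▸ hq)
        rw [mem_override, if_neg hqκ]
      refine ⟨K', (hE2.trans hE1 : K₂.E = K.E), ?_, ?_, ?_⟩
      · intro v q hq
        have hq1 : ∀ θ, (q, θ) ∉ C₁ :=
          fun θ hθ => hq θ (List.mem_append.2 (Or.inl (List.mem_append.2 (Or.inl hθ))))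
        have hq2 : ∀ θ, (q, θ) ∉ C₂ :=
          fun θ hθ => hq θ (List.mem_append.2 (Or.inl (List.mem_append.2 (Or.inr hθ))))
        have hqκ : q ≠ κ := fun hc => hq θnew (hc ▸ hmemlast)
        rw [show q ∈ K'.label v ↔ _ from mem_override K₂ κ _ v q, if_neg hqκ]
        exact (hag2 v q hq2).trans (hag1 v q hq1)
      · intro p hp v
        rcases List.mem_append.1 hp with h | h
        · rcases List.mem_append.1 h with h' | h'
          · have hpκ : (p.1 : AP) ≠ κ := by
              intro hc
              refine hκ'.2.2.2.2.1 p.2 ?_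
              rw [← hc]
              exact (show (p.1, p.2) ∈ C₁ from h')
            have hkey2 : (p.1 : AP) ∈ K₂.label v ↔ p.1 ∈ K₁.label v := by
              refine hag2 v p.1 ?_
              intro θ hθ
              exact (hfresh2' (p.1, θ) hθ).2.2.2.1 p.2 (show (p.1, p.2) ∈ C₁ from h')
            rw [show (p.1 : AP) ∈ K'.label v ↔ _ from mem_override K₂ κ _ v p.1,
              if_neg hpκ, hkey2, hcon1 p h' v]
            rw [trans12 p.2 (hθat1 p h') v]
            refine transκ p.2 ?_ v
            intro hc
            rcases hθat1 p h' κ hc with h'' | ⟨θ, h''⟩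
            · exact hκ'.2.2.1 h''
            · exact hκ'.2.2.2.2.1 θ h''
          · have hpκ : (p.1 : AP) ≠ κ := by
              intro hc
              refine hκ'.2.2.2.2.2 p.2 ?_
              rw [← hc]
              exact (show (p.1, p.2) ∈ C₂ from h')
            rw [show (p.1 : AP) ∈ K'.label v ↔ _ from mem_override K₂ κ _ v p.1,
              if_neg hpκ, hcon2 p h' v]
            refine transκ p.2 ?_ v
            intro hc
            rcases hθat2 p h' κ hc with h'' | ⟨θ, h''⟩
            · exact hκ'.2.2.2.1 h''
            · exact hκ'.2.2.2.2.2 θ h''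
        · have hpe : p = (κ, θnew) := by simpa using h
          rw [hpe]
          rw [show (κ : AP) ∈ K'.label v ↔ _ from mem_override K₂ κ _ v κ, if_pos rfl]
          simp only [Set.mem_setOf_eq]
          exact transκ θnew hκθ v
      · intro v
        rw [show (QCTL.atom κ).sat K' v ↔ κ ∈ K'.label v from Iff.rfl]
        rw [show (κ : AP) ∈ K'.label v ↔ _ from mem_override K₂ κ _ v κ, if_pos rfl]
        simp only [Set.mem_setOf_eq]
        have hb1K₂ : ∀ u, b₁.sat K₂ u ↔ φ.sat K₂ u := by
          intro u
          rw [← trans12 b₁ hbat1 u, ← trans12 φ (fun q hq => Or.inl hq) u]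
          exact hb1iff u
        have h1 : θnew.sat K₂ v ↔ (QCTL.qAU φ ψ).sat K₂ v := by
          refine sat_qAU_congr ?_
          intro u _
          exact ⟨hb1K₂ u, hb2iff u⟩
        rw [h1]
        refine transκ (QCTL.qAU φ ψ) ?_ v
        intro hc
        have : κ ∈ φ.atoms ∨ κ ∈ ψ.atoms := by
          simpa [QCTL.atoms] using hc
        rcases this with h | h
        · exact hκ'.2.2.1 h
        · exact hκ'.2.2.2.1 h
  | qexi p φ ih =>
    intro hqf
    exact absurd hqf (by simp [QCTL.quantFree])

end Stage2


/-! ### Assembly -/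

section Assembly

set_option linter.unusedSectionVars false
set_option maxHeartbeats 1000000

lemma boolAtoms_bcb {b : QCTL AP} (h : BoolAtoms b) : BoolCombBasic b := by
  induction h with
  | atom p => exact BoolCombBasic.atom p
  | qneg _ ih => exact BoolCombBasic.qneg ih
  | qor _ _ ih1 ih2 => exact BoolCombBasic.qor ih1 ih2

lemma conjList_sat {l : List (QCTL AP)} {base : QCTL AP} {K : Kripke AP V} {x : V} :
    ((conjList l base).sat K x ↔ (∀ ψ ∈ l, ψ.sat K x) ∧ base.sat K x) := by
  induction l with
  | nil => simp [conjList]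
  | cons ψ l ih =>
    show ((qand ψ (conjList l base)).sat K x ↔ _)
    rw [sat_qand, ih]
    constructor
    · rintro ⟨h1, h2, h3⟩
      exact ⟨fun χ hχ => by
        rcases List.mem_cons.1 hχ with rfl | h
        · exact h1
        · exact h2 χ h, h3⟩
    · rintro ⟨h1, h2⟩
      exact ⟨h1 ψ (List.mem_cons_self), fun χ hχ => h1 χ (List.mem_cons_of_mem _ hχ), h2⟩

lemma qsize_conjList : ∀ (l : List (QCTL AP)) (base : QCTL AP),
    (conjList l base).qsize = (l.map QCTL.qsize).sum + 4 * l.length + base.qsize := by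
  intro l
  induction l with
  | nil => intro base; simp [conjList]
  | cons ψ l ih =>
    intro base
    show ((qand ψ (conjList l base)).qsize = _)
    rw [qsize_qand, ih]
    simp only [List.map_cons, List.sum_cons, List.length_cons]
    omega

lemma qsize_qiff {φ ψ : QCTL AP} : (qiff φ ψ).qsize = 2 * φ.qsize + 2 * ψ.qsize + 8 := by
  simp only [qiff, qsize_qand, qsize_qimp]
  omega

lemma sum_mapAG [Inhabited AP] : ∀ (C : List (AP × QCTL AP)),
    ((C.map (fun c => qAG (qiff (QCTL.atom c.1) c.2))).map QCTL.qsize).sum ≤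
      2 * (C.map (fun p => (p.2 : QCTL AP).qsize)).sum + 17 * C.length := by
  intro C
  induction C with
  | nil => simp
  | cons p C ih =>
    simp only [List.map_cons, List.sum_cons, List.length_cons]
    have : (qAG (qiff (QCTL.atom p.1) p.2)).qsize = 2 * (p.2 : QCTL AP).qsize + 17 := by
      rw [qsize_qAG, qsize_qiff]
      simp only [QCTL.qsize]
      omega
    omega

lemma QAtoms_map_true {l : List AP} :
    QAtoms (l.map (fun κ => ((true : Bool), κ))) = {q | q ∈ l} := by
  ext q
  simp [QAtoms, List.mem_map]

lemma exi_intro : ∀ (l : List AP) (K K' : Kripke AP V) (x : V) (ψ : QCTL AP),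
    K'.E = K.E → (∀ v q, q ∉ l → (q ∈ K'.label v ↔ q ∈ K.label v)) →
    ψ.sat K' x → (prefixQ (l.map (fun κ => ((true : Bool), κ))) ψ).sat K x := by
  intro l
  induction l with
  | nil =>
    intro K K' x ψ hE hl hs
    rw [List.map_nil, prefixQ_nil]
    exact (sat_invar ψ K K' hE (fun v q _ => (hl v q (by simp)).symm) x).2 hs
  | cons κ rest ih =>
    intro K K' x ψ hE hl hs
    rw [List.map_cons, prefixQ_cons_true, sat_qexi]
    refine ⟨K.override κ {v | κ ∈ K'.label v}, agreeExcept_override K κ _, ?_⟩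
    refine ih (K.override κ _) K' x ψ (by rw [hE]; rfl) ?_ hs
    intro v q hq
    by_cases hqκ : q = κ
    · subst hqκ
      rw [mem_override, if_pos rfl]
      exact Iff.rfl
    · rw [mem_override, if_neg hqκ]
      refine hl v q ?_
      intro hc
      rcases List.mem_cons.1 hc with h | h
      · exact hqκ h
      · exact hq h

lemma stage2_final [Inhabited AP] [Infinite AP] (M : QCTL AP) (hqf : M.quantFree) :
    ∃ (C : List (AP × QCTL AP)) (b : QCTL AP),
      BoolAtoms b ∧
      (∀ p ∈ C, BasicCTL (p.2 : QCTL AP)) ∧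
      ((C.map (fun p => (p.2 : QCTL AP).qsize)).sum + b.qsize ≤ 2 * M.qsize) ∧
      (C.length ≤ M.qsize) ∧
      (∀ (W : Type) (K : Kripke AP W) (x : W), M.sat K x ↔
        (prefixQ (C.map (fun c => ((true : Bool), c.1)))
          (conjList (C.map (fun c => qAG (qiff (QCTL.atom c.1) c.2))) b)).sat K x) := by
  obtain ⟨C, b, hb, hbasic, hfresh, hbat, hθat, hsz, hlen, HA, HB⟩ :=
    stage2 M hqf ∅ Set.finite_empty
  refine ⟨C, b, hb, hbasic, hsz, hlen, ?_⟩
  intro W K x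
  have hkeyM : ∀ q, (∃ θ, (q, θ) ∈ C) → q ∉ M.atoms := by
    rintro q ⟨θ, hθ⟩
    exact (hfresh (q, θ) hθ).2.1
  constructor
  · intro hM
    obtain ⟨K', hE', hag', hcon', hbiff'⟩ := HB W K
    have hMK' : M.sat K' x := by
      refine (sat_invar M K K' hE' ?_ x).1 hM
      intro v q hq
      exact (hag' v q (fun θ hθ => hkeyM q ⟨θ, hθ⟩ hq)).symm
    have hbody : (conjList (C.map (fun c => qAG (qiff (QCTL.atom c.1) c.2))) b).sat K' x := by
      rw [conjList_sat]
      constructor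
      · intro ψ hψ
        obtain ⟨p, hp, rfl⟩ := List.mem_map.1 hψ
        rw [sat_qAG]
        intro v _
        rw [sat_qiff]
        exact hcon' p hp v
      · exact (hbiff' x).2 hMK'
    have : C.map (fun c => ((true : Bool), c.1)) =
        (C.map Prod.fst).map (fun κ => ((true : Bool), κ)) := by
      rw [List.map_map]
      rfl
    rw [this]
    refine exi_intro (C.map Prod.fst) K K' x _ hE' ?_ hbody
    intro v q hq
    refine hag' v q ?_
    intro θ hθ
    exact hq (List.mem_map.2 ⟨(q, θ), hθ, rfl⟩)
  · intro hpre
    obtain ⟨K'', hag, hbody⟩ := prefix_elim _ K x _ hpre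
    rw [conjList_sat] at hbody
    have hcon : ∀ p ∈ C, ∀ v, KReach K'' x v →
        ((p.1 : AP) ∈ K''.label v ↔ (p.2 : QCTL AP).sat K'' v) := by
      intro p hp v hv
      have := hbody.1 _ (List.mem_map.2 ⟨p, hp, rfl⟩)
      rw [sat_qAG] at this
      have := this v hv
      rw [sat_qiff] at this
      exact this
    have hbM : b.sat K'' x ↔ M.sat K'' x :=
      HA W K'' x hcon x Relation.ReflTransGen.refl
    have hMK'' : M.sat K'' x := hbM.1 hbody.2
    refine (sat_invar M K K'' hag.1 ?_ x).2 hMK''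
    intro v q hq
    refine (hag.2 v q ?_).symm
    intro hc
    rw [show QAtoms (C.map (fun c => ((true : Bool), c.1))) = _ from rfl] at hc
    obtain ⟨bb, hbb⟩ := hc
    obtain ⟨p, hp, hpe⟩ := List.mem_map.1 hbb
    have : q = p.1 := (congrArg Prod.snd hpe).symm
    exact hkeyM q ⟨p.2, this ▸ hp⟩ hq

lemma qsize_pos (φ : QCTL AP) : 1 ≤ φ.qsize := by
  induction φ <;> simp [QCTL.qsize]

end Assembly

end FlatAux

/-- Flattening of QCTL: any QCTL formula `Φ` is equivalent to a flat formula
`Q.( Φ₀ ∧ ⋀ᵢ AG(κᵢ ↔ θᵢ) )` — with `Q` a sequence of propositional quantifications,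
`Φ₀` a Boolean combination of basic CTL formulas and every `θᵢ` a basic CTL formula —
whose size is linear in `|Φ|`. -/
theorem flatten_qctl {AP : Type} [Inhabited AP] [Infinite AP] :
    ∃ C : ℕ, ∀ Φ : QCTL AP,
      ∃ (Q : List (Bool × AP)) (m : ℕ) (κ : Fin m → AP)
        (Φ0 : QCTL AP) (θ : Fin m → QCTL AP),
        BoolCombBasic Φ0 ∧ (∀ i, BasicCTL (θ i)) ∧
        QEquiv Φ (prefixQ Q (flatBody m κ Φ0 θ)) ∧
        (prefixQ Q (flatBody m κ Φ0 θ)).qsize ≤ C * Φ.qsize := by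
  classical
  refine ⟨6000, ?_⟩
  intro Φ
  obtain ⟨Q, M, hqf, hQ, hM, hsize1, HQ⟩ := stage1 Φ ∅ Set.finite_empty
  obtain ⟨C, b, hb, hbasic, hsz2a, hsz2b, HEQ⟩ := stage2_final M hqf
  have hflat : flatBody C.length (fun i => (C.get i).1) b (fun i => (C.get i).2) =
      conjList (C.map (fun c => QCTL.qAG (QCTL.qiff (QCTL.atom c.1) c.2))) b := by
    unfold flatBody
    congr 1
    have h1 : (List.finRange C.length).map
        (fun i => QCTL.qAG (QCTL.qiff (QCTL.atom ((C.get i).1)) ((C.get i).2))) =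
        ((List.finRange C.length).map C.get).map
          (fun c => QCTL.qAG (QCTL.qiff (QCTL.atom c.1) c.2)) := by
      rw [List.map_map]
      rfl
    rw [h1, List.map_get_finRange]
  refine ⟨Q ++ C.map (fun c => ((true : Bool), c.1)), C.length, fun i => (C.get i).1, b,
    fun i => (C.get i).2, boolAtoms_bcb hb, ?_, ?_, ?_⟩
  · intro i
    exact hbasic _ (List.get_mem C i)
  · intro V _ K x
    rw [HQ V K x, hflat, prefixQ_append]
    exact prefix_congr (fun K' _ => HEQ V K' x)
  · rw [hflat]
    have h2 : (prefixQ (Q ++ C.map (fun c => ((true : Bool), c.1)))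
        (conjList (C.map (fun c => QCTL.qAG (QCTL.qiff (QCTL.atom c.1) c.2))) b)).qsize ≤
        3 * (Q ++ C.map (fun c => ((true : Bool), c.1))).length +
        (conjList (C.map (fun c => QCTL.qAG (QCTL.qiff (QCTL.atom c.1) c.2))) b).qsize :=
      qsize_prefixQ
    rw [List.length_append, List.length_map] at h2
    have h3 := qsize_conjList (C.map (fun c => QCTL.qAG (QCTL.qiff (QCTL.atom c.1) c.2))) b
    rw [List.length_map] at h3
    have h4 := sum_mapAG (AP := AP) C
    have h5 := qsize_pos Φ
    omega
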